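/- arXiv:1506.04485 — 4 statements merged into one kernel-verified Lean document; each statement's English description precedes it below -/
import Mathlib

section
/- Let h : {0,1}^n → {0,1} with d(h) ≤ r, let G = {g_1, …, g_m} be Boolean functions on {0,1}^{n+1}, and define f_i(x) = g_i(h(x), x) for i = 1, …, m; set F = {f_1, …, f_m}. Then d(F) ≤ 2·d(G) + 2r + 1. -/
open Classical in
/-- Number of jumps (1→0 drops of some member of `F`) between consecutive
elements of a list of Boolean tuples. -/
noncomputable def jumps {k : ℕ} (F : Finset ((Fin k → Bool) → Bool)) :
    List (Fin k → Bool) → ℕ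
  | a :: b :: t =>
      (if ∃ f ∈ F, f a = true ∧ f b = false then 1 else 0) + jumps F (b :: t)
  | _ => 0

/-- Number of value changes of `h` between consecutive elements of a list. -/
def changes {k : ℕ} (h : (Fin k → Bool) → Bool) :
    List (Fin k → Bool) → ℕ
  | a :: b :: t => (if h a ≠ h b then 1 else 0) + changes h (b :: t)
  | _ => 0

/-- An increasing chain of pairwise distinct tuples (coordinatewise order). -/
def IsIncChain {k : ℕ} (l : List (Fin k → Bool)) : Prop :=
  l.Chain' (· ≤ ·) ∧ l.Pairwise (· ≠ ·)

/-- The decrease `d(F)` of a system of Boolean functions: the maximum number of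
jumps over all increasing chains. -/
noncomputable def decrease {k : ℕ} (F : Finset ((Fin k → Bool) → Bool)) : ℕ :=
  sSup {m | ∃ l, IsIncChain l ∧ jumps F l = m}

/-- The decrease `d(f)` of a single Boolean function. -/
noncomputable def decrease1 {k : ℕ} (f : (Fin k → Bool) → Bool) : ℕ :=
  decrease {f}

/- ----------------- auxiliary lemmas ----------------- -/

lemma jumps_le_length {k : ℕ} (F : Finset ((Fin k → Bool) → Bool)) :
    ∀ l : List (Fin k → Bool), jumps F l ≤ l.length
  | [] => by simp [jumps]
  | [a] => by simp [jumps]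
  | a :: b :: t => by
      have ih := jumps_le_length F (b :: t)
      rw [jumps]
      simp only [List.length_cons] at *
      have : (if ∃ f ∈ F, f a = true ∧ f b = false then 1 else 0) ≤ 1 := by
        split <;> simp
      exact le_trans (Nat.add_le_add this ih) (le_of_eq (Nat.add_comm 1 _))

lemma jumps_le_cons {k : ℕ} (F : Finset ((Fin k → Bool) → Bool))
    (a : Fin k → Bool) (l : List (Fin k → Bool)) :
    jumps F l ≤ jumps F (a :: l) := by
  cases l with
  | nil => simp [jumps]
  | cons b t => rw [jumps]; exact Nat.le_add_left _ _

/-- weight: number of true coordinates -/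
private def wt {k : ℕ} (a : Fin k → Bool) : ℕ :=
  (Finset.univ.filter fun i => a i = true).card

lemma wt_lt {k : ℕ} {a b : Fin k → Bool} (hle : a ≤ b) (hne : a ≠ b) :
    wt a < wt b := by
  have himp : ∀ x y : Bool, x ≤ y → x = true → y = true := by decide
  apply Finset.card_lt_card
  constructor
  · intro i hi
    simp only [Finset.mem_filter, Finset.mem_univ, true_and] at *
    exact himp _ _ (hle i) hi
  · intro hsub
    apply hne
    funext i
    by_contra hne'
    have hf : a i = false := by
      have h1 := hle i; revert h1 hne'; cases a i <;> cases b i <;> simp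
    have hbt : b i = true := by
      have h1 := hle i; revert h1 hne'; cases a i <;> cases b i <;> simp
    have hmem : i ∈ Finset.univ.filter (fun j => b j = true) := by simp [hbt]
    have := hsub hmem
    simp [hf] at this

lemma isIncChain_length {k : ℕ} {l : List (Fin k → Bool)} (hl : IsIncChain l) :
    l.length ≤ k + 1 := by
  obtain ⟨hc, hne⟩ := hl
  have hle : l.Pairwise (· ≤ ·) := List.isChain_iff_pairwise.mp hc
  have hlt : (l.map wt).Pairwise (· < ·) := by
    rw [List.pairwise_map]
    exact (hle.and hne).imp fun h => wt_lt h.1 h.2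
  have hnd : (l.map wt).Nodup := hlt.imp fun h => Nat.ne_of_lt h
  have hsub : (l.map wt).toFinset ⊆ Finset.range (k + 1) := by
    intro m hm
    simp only [List.mem_toFinset, List.mem_map] at hm
    obtain ⟨a, _, rfl⟩ := hm
    have hwk : wt a ≤ k := by
      have := Finset.card_filter_le (Finset.univ : Finset (Fin k)) (fun i => a i = true)
      simpa [wt] using this
    simp only [Finset.mem_range]
    omega
  have := Finset.card_le_card hsub
  rwa [List.toFinset_card_of_nodup hnd, Finset.card_range, List.length_map] at this

lemma jumps_le_decrease {k : ℕ} (F : Finset ((Fin k → Bool) → Bool))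
    {l : List (Fin k → Bool)} (hl : IsIncChain l) :
    jumps F l ≤ decrease F := by
  apply le_csSup
  · refine ⟨k + 1, ?_⟩
    rintro m ⟨l', hl', rfl⟩
    exact (jumps_le_length F l').trans (isIncChain_length hl')
  · exact ⟨l, hl, rfl⟩

/-- changes of `h` along any list, bounded via jumps of `{h}`. -/
lemma changes_aux {k : ℕ} (h : (Fin k → Bool) → Bool) :
    ∀ (a : Fin k → Bool) (t : List (Fin k → Bool)),
      changes h (a :: t) + (if h a = true then 1 else 0) ≤
        2 * jumps {h} (a :: t) + 1
  | a, [] => by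
      simp only [changes, jumps]
      split <;> simp
  | a, b :: t => by
      have ih := changes_aux h b t
      rw [changes, jumps]
      have hj : (if ∃ f ∈ ({h} : Finset ((Fin k → Bool) → Bool)),
          f a = true ∧ f b = false then 1 else 0)
          = (if h a = true ∧ h b = false then 1 else 0) := by
        simp
      rw [hj]
      clear hj
      cases hab : h a <;> cases hbb : h b <;>
        (generalize changes h (b :: t) = C at ih ⊢;
         generalize jumps {h} (b :: t) = J at ih ⊢;
         simp [hab, hbb] at ih ⊢; omega)

lemma changes_le {k : ℕ} (h : (Fin k → Bool) → Bool) (l : List (Fin k → Bool)) :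
    changes h l ≤ 2 * jumps {h} l + 1 := by
  cases l with
  | nil => simp [changes, jumps]
  | cons a t =>
      have h1 := changes_aux h a t
      exact le_trans (Nat.le_add_right _ _) h1

lemma isIncChain_sublist {k : ℕ} {l l' : List (Fin k → Bool)}
    (hs : l'.Sublist l) (hl : IsIncChain l) : IsIncChain l' := by
  obtain ⟨hc, hne⟩ := hl
  refine ⟨List.isChain_iff_pairwise.mpr ?_, hne.sublist hs⟩
  exact (List.isChain_iff_pairwise.mp hc).sublist hs

private lemma arith_same1 {jf jg s x y w : ℕ} (h1 : jf ≤ jg) (h2 : s ≤ x + y + w) :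
    jf + s ≤ jg + x + y + (0 + w) := by omega

private lemma arith_same2 {jf jg s x y w : ℕ} (h1 : jf ≤ jg) (h2 : s ≤ x + y + w) :
    jf + s ≤ x + (jg + y) + (0 + w) := by omega

private lemma arith_diff1 {jf s x x' y w : ℕ} (h1 : jf ≤ 1) (h2 : x ≤ x')
    (h3 : s ≤ x + y + w) : jf + s ≤ x' + y + (1 + w) := by omega

private lemma arith_diff2 {jf s x x' y w : ℕ} (h1 : jf ≤ 1) (h2 : x ≤ x')
    (h3 : s ≤ y + x + w) : jf + s ≤ y + x' + (1 + w) := by omega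

private lemma arith_final {J X0 X1 C D Jh d1 r : ℕ} (h1 : J ≤ X0 + X1 + C)
    (h2 : X0 ≤ D) (h3 : X1 ≤ D) (h4 : C ≤ 2 * Jh + 1) (h5 : Jh ≤ d1)
    (h6 : d1 ≤ r) : J ≤ 2 * D + 2 * r + 1 := by omega

/-- Key combinatorial lemma: jumps of the composed system along a list are at
most the jumps of `G` along the two mapped subchains plus changes of `h`. -/
lemma key {n : ℕ} (h : (Fin n → Bool) → Bool)
    (G : Finset ((Fin (n + 1) → Bool) → Bool)) :
    ∀ l : List (Fin n → Bool),
      jumps (G.image (fun g => fun x : Fin n → Bool => g (Fin.cons (h x) x))) l ≤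
        jumps G ((l.filter fun a => !(h a)).map fun a => Fin.cons (h a) a)
        + jumps G ((l.filter fun a => h a).map fun a => Fin.cons (h a) a)
        + changes h l
  | [] => by simp only [jumps]; exact Nat.zero_le _
  | [a] => by simp only [jumps]; exact Nat.zero_le _
  | a :: b :: t => by
      have ih := key h G (b :: t)
      set F := G.image (fun g => fun x : Fin n → Bool => g (Fin.cons (h x) x)) with hF
      have hjump : ∀ u v : Fin n → Bool,
          (if ∃ f ∈ F, f u = true ∧ f v = false then 1 else 0) ≤
          (if ∃ g ∈ G, g (Fin.cons (h u) u) = true ∧ g (Fin.cons (h v) v) = false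
            then 1 else 0) := by
        intro u v
        split
        · next hex =>
            obtain ⟨f, hf, h1, h0⟩ := hex
            rw [hF, Finset.mem_image] at hf
            obtain ⟨g, hg, rfl⟩ := hf
            have hc2 : ∃ g' ∈ G, g' (Fin.cons (h u) u) = true ∧
                g' (Fin.cons (h v) v) = false :=
              ⟨g, hg, by simpa using h1, by simpa using h0⟩
            rw [if_pos hc2]
        · exact Nat.zero_le _
      rw [jumps, changes]
      by_cases hab : h a = h b
      · have hch : (if h a ≠ h b then 1 else 0) = 0 := by simp [hab]
        rw [hch]
        cases hb : h b
        · have ha : h a = false := by rw [hab, hb]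
          have e0 : ((a :: b :: t).filter fun x => !(h x)) =
              a :: b :: (t.filter fun x => !(h x)) := by
            simp [List.filter_cons, ha, hb]
          have e1 : ((a :: b :: t).filter fun x => h x) =
              ((b :: t).filter fun x => h x) := by
            simp [List.filter_cons, ha]
          have e0' : ((b :: t).filter fun x => !(h x)) =
              b :: (t.filter fun x => !(h x)) := by
            simp [List.filter_cons, hb]
          rw [e0, e1]
          simp only [List.map_cons]
          rw [jumps]
          rw [e0'] at ih
          simp only [List.map_cons] at ih
          exact arith_same1 (hjump a b) ih
        · have ha : h a = true := by rw [hab, hb]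
          have e1 : ((a :: b :: t).filter fun x => h x) =
              a :: b :: (t.filter fun x => h x) := by
            simp [List.filter_cons, ha, hb]
          have e0 : ((a :: b :: t).filter fun x => !(h x)) =
              ((b :: t).filter fun x => !(h x)) := by
            simp [List.filter_cons, ha]
          have e1' : ((b :: t).filter fun x => h x) =
              b :: (t.filter fun x => h x) := by
            simp [List.filter_cons, hb]
          rw [e1, e0]
          simp only [List.map_cons]
          rw [jumps]
          rw [e1'] at ih
          simp only [List.map_cons] at ih
          exact arith_same2 (hjump a b) ih
      · have hch : (if h a ≠ h b then 1 else 0) = 1 := by simp [hab]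
        have hj1 : (if ∃ f ∈ F, f a = true ∧ f b = false then 1 else 0) ≤ 1 := by
          split <;> simp
        rw [hch]
        cases ha : h a
        · have e0 : ((a :: b :: t).filter fun x => !(h x)) =
              a :: ((b :: t).filter fun x => !(h x)) := by
            simp [List.filter_cons, ha]
          have e1 : ((a :: b :: t).filter fun x => h x) =
              ((b :: t).filter fun x => h x) := by
            simp [List.filter_cons, ha]
          rw [e0, e1]
          simp only [List.map_cons]
          have hmono := jumps_le_cons G (Fin.cons (h a) a)
              (((b :: t).filter fun x => !(h x)).map fun x => Fin.cons (h x) x)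
          exact arith_diff1 hj1 hmono ih
        · have e1 : ((a :: b :: t).filter fun x => h x) =
              a :: ((b :: t).filter fun x => h x) := by
            simp [List.filter_cons, ha]
          have e0 : ((a :: b :: t).filter fun x => !(h x)) =
              ((b :: t).filter fun x => !(h x)) := by
            simp [List.filter_cons, ha]
          rw [e0, e1]
          simp only [List.map_cons]
          have hmono := jumps_le_cons G (Fin.cons (h a) a)
              (((b :: t).filter fun x => h x).map fun x => Fin.cons (h x) x)
          exact arith_diff2 hj1 hmono ih

lemma isIncChain_map_emb {n : ℕ} (h : (Fin n → Bool) → Bool) (c : Bool)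
    {l : List (Fin n → Bool)} (hl : IsIncChain l)
    (hc : ∀ x ∈ l, h x = c) :
    IsIncChain (l.map fun a => Fin.cons (h a) a) := by
  obtain ⟨hch, hne⟩ := hl
  have hpw : l.Pairwise (· ≤ ·) := List.isChain_iff_pairwise.mp hch
  constructor
  · show List.IsChain _ _
    rw [List.isChain_map]
    apply List.Pairwise.isChain
    refine hpw.imp_of_mem ?_
    intro a b ha hb hab
    intro i
    refine Fin.cases ?_ ?_ i
    · simp [hc a ha, hc b hb]
    · intro j; simpa using hab j
  · rw [List.pairwise_map]
    refine hne.imp ?_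
    intro a b hab hEq
    apply hab
    have := congrArg Fin.tail hEq
    simpa [Fin.tail_cons] using this

/-- if `d(h) ≤ r` and `F` is obtained from a system `G` on
`{0,1}^{n+1}` by substituting `h(x)` for the first variable, then
`d(F) ≤ 2·d(G) + 2r + 1`. -/
theorem stmt9 {n : ℕ} (h : (Fin n → Bool) → Bool) (r : ℕ)
    (hr : decrease1 h ≤ r) (G : Finset ((Fin (n + 1) → Bool) → Bool)) :
    decrease (G.image (fun g => fun x : Fin n → Bool => g (Fin.cons (h x) x)))
      ≤ 2 * decrease G + 2 * r + 1 := by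
  apply csSup_le'
  rintro m ⟨l, hl, rfl⟩
  have hkey := key h G l
  have h0 : IsIncChain ((l.filter fun a => !(h a)).map fun a => Fin.cons (h a) a) := by
    apply isIncChain_map_emb h false
    · exact isIncChain_sublist List.filter_sublist hl
    · intro x hx
      have := List.of_mem_filter hx
      simpa using this
  have h1 : IsIncChain ((l.filter fun a => h a).map fun a => Fin.cons (h a) a) := by
    apply isIncChain_map_emb h true
    · exact isIncChain_sublist List.filter_sublist hl
    · intro x hx
      have := List.of_mem_filter hx
      simpa using this
  have hb0 := jumps_le_decrease G h0
  have hb1 := jumps_le_decrease G h1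
  have hch := changes_le h l
  have hjh : jumps {h} l ≤ decrease1 h := jumps_le_decrease {h} hl
  exact arith_final hkey hb0 hb1 hch hjh hr
end

section
/- Markov's theorem (lower bound restated combinatorially): any circuit over the basis of all monotone Boolean functions together with negation that computes a system F of Boolean functions must contain at least ⌈log₂(d(F)+1)⌉ negation gates; equivalently, a circuit with k negations can only compute systems F with d(F) ≤ 2^k − 1. -/
/-- A Boolean circuit over the basis consisting of all monotone Boolean
functions (weight 0) together with the non-monotone basis functions from `Ω`
(weight 1).  Gate `i` may read the `n` inputs and all previous gate values. -/
structure Circuit (n : ℕ) (Ω : Set (Σ m : ℕ, (Fin m → Bool) → Bool)) where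
  size : ℕ
  gate : (i : Fin size) → ((Fin (n + i) → Bool) → Bool)
  nonmono : Finset (Fin size)
  mono_ok : ∀ i, i ∉ nonmono → Monotone (gate i)
  basis_ok : ∀ i ∈ nonmono, ∃ ω ∈ Ω, ∃ sel : Fin ω.1 → Fin (n + i),
      gate i = fun v => ω.2 (fun j => v (sel j))

/-- The value carried by wire `j` of the circuit (wires `0,…,n-1` are the
inputs, wire `n+i` is the output of gate `i`). -/
def Circuit.wire {n : ℕ} {Ω : Set (Σ m : ℕ, (Fin m → Bool) → Bool)}
    (C : Circuit n Ω) (x : Fin n → Bool) (j : ℕ) : Bool :=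
  if h : j < n then x ⟨j, h⟩
  else if h2 : j - n < C.size then
    C.gate ⟨j - n, h2⟩ (fun t => C.wire x t.val)
  else false
termination_by j
decreasing_by
  have ht := t.isLt
  simp only [not_lt] at h
  simp at ht
  omega

/-- The circuit `C` computes the system `F` if every member of `F` appears on
some wire of `C`. -/
def Circuit.Computes {n : ℕ} {Ω : Set (Σ m : ℕ, (Fin m → Bool) → Bool)}
    (C : Circuit n Ω) (F : Finset ((Fin n → Bool) → Bool)) : Prop :=
  ∀ f ∈ F, ∃ o : ℕ, o < n + C.size ∧ ∀ x, f x = C.wire x o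

/-- The inversion complexity `I_B(F)`: the minimal number of non-monotone
(weight-1) gates in a circuit over the basis computing the system `F`. -/
noncomputable def invCompl (n : ℕ) (Ω : Set (Σ m : ℕ, (Fin m → Bool) → Bool))
    (F : Finset ((Fin n → Bool) → Bool)) : ℕ :=
  sInf {k | ∃ C : Circuit n Ω, C.Computes F ∧ C.nonmono.card = k}

/-- The basis `{¬}`: negation as the unique weight-1 basis function. -/
def negBasis : Set (Σ m : ℕ, (Fin m → Bool) → Bool) :=
  {⟨1, fun v => !(v 0)⟩}



/-! ### Auxiliary lemmas -/

open Classical in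
lemma jumps_nil {k : ℕ} (F : Finset ((Fin k → Bool) → Bool)) : jumps F [] = 0 := rfl

open Classical in
lemma jumps_single {k : ℕ} (F : Finset ((Fin k → Bool) → Bool)) (a : Fin k → Bool) :
    jumps F [a] = 0 := rfl

open Classical in
lemma jumps_cons₂ {k : ℕ} (F : Finset ((Fin k → Bool) → Bool)) (a b : Fin k → Bool)
    (t : List (Fin k → Bool)) :
    jumps F (a :: b :: t) =
      (if ∃ f ∈ F, f a = true ∧ f b = false then 1 else 0) + jumps F (b :: t) := rfl

lemma jumps_empty {k : ℕ} : ∀ l, jumps (∅ : Finset ((Fin k → Bool) → Bool)) l = 0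
  | [] => rfl
  | [_] => rfl
  | a :: b :: t => by
    rw [jumps_cons₂, jumps_empty (b :: t)]
    simp

section Aux

variable {n : ℕ} {Ω : Set (Σ m : ℕ, (Fin m → Bool) → Bool)}

lemma Circuit.wire_lt (C : Circuit n Ω) (x : Fin n → Bool) {j : ℕ} (h : j < n) :
    C.wire x j = x ⟨j, h⟩ := by
  rw [Circuit.wire, dif_pos h]

lemma Circuit.wire_gate (C : Circuit n Ω) (x : Fin n → Bool) (i : Fin C.size) :
    C.wire x (n + i.val) = C.gate i (fun t => C.wire x t.val) := by
  rw [Circuit.wire, dif_neg (by omega)]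
  have h2 : n + i.val - n < C.size := by simp
  rw [dif_pos h2]
  have e : (⟨n + i.val - n, h2⟩ : Fin C.size) = i := by
    ext; simp
  rw [e]

lemma Circuit.wire_ge (C : Circuit n Ω) (x : Fin n → Bool) {j : ℕ}
    (h : ¬ j < n) (h2 : ¬ (j - n < C.size)) : C.wire x j = false := by
  rw [Circuit.wire, dif_neg h, dif_neg h2]

lemma Circuit.wire_mono (C : Circuit n Ω) (m : ℕ)
    (hm : ∀ i ∈ C.nonmono, m ≤ i.val) :
    ∀ j, j < n + m → Monotone (fun x => C.wire x j) := by
  intro j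
  induction j using Nat.strong_induction_on with
  | _ j IH =>
    intro hj x y hxy
    by_cases h : j < n
    · simp only [C.wire_lt x h, C.wire_lt y h]
      exact hxy _
    · by_cases h2 : j - n < C.size
      · obtain ⟨i, rfl⟩ : ∃ i : Fin C.size, j = n + i.val :=
          ⟨⟨j - n, h2⟩, by simp; omega⟩
        simp only [C.wire_gate]
        have hnm : i ∉ C.nonmono := by
          intro hin
          have := hm i hin
          omega
        exact C.mono_ok i hnm fun t => IH t.val (by omega) (by omega) hxy
      · simp only [C.wire_ge _ h h2, le_refl]

/-- Replace gate `i₀` by the constant `c`. -/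
def modC (C : Circuit n Ω) (i₀ : Fin C.size) (c : Bool) : Circuit n Ω where
  size := C.size
  gate := fun i => if i = i₀ then (fun _ => c) else C.gate i
  nonmono := C.nonmono.erase i₀
  mono_ok := by
    intro i hi
    by_cases h : i = i₀
    · simp only [if_pos h]
      exact monotone_const
    · simp only [if_neg h]
      exact C.mono_ok i fun hin => hi (Finset.mem_erase.2 ⟨h, hin⟩)
  basis_ok := by
    intro i hi
    have h := Finset.mem_erase.1 hi
    simp only [if_neg h.1]
    exact C.basis_ok i h.2

lemma mod_wire_eq (C : Circuit n Ω) (i₀ : Fin C.size) (c : Bool)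
    (x : Fin n → Bool) (hx : C.wire x (n + i₀.val) = c) :
    ∀ j, (modC C i₀ c).wire x j = C.wire x j := by
  intro j
  induction j using Nat.strong_induction_on with
  | _ j IH =>
    by_cases h : j < n
    · rw [(modC C i₀ c).wire_lt x h, C.wire_lt x h]
    · by_cases h2 : j - n < C.size
      · obtain ⟨i, rfl⟩ : ∃ i : Fin C.size, j = n + i.val :=
          ⟨⟨j - n, h2⟩, by simp; omega⟩
        by_cases hii : i = i₀
        · rw [(modC C i₀ c).wire_gate x i]
          show (if i = i₀ then (fun _ => c) else C.gate i) _ = _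
          rw [if_pos hii, hii]
          exact hx.symm
        · rw [(modC C i₀ c).wire_gate x i, C.wire_gate x i]
          show (if i = i₀ then (fun _ => c) else C.gate i) _ = _
          rw [if_neg hii]
          congr 1
          funext t
          exact IH t.val (by omega)
      · rw [(modC C i₀ c).wire_ge x h h2, C.wire_ge x h h2]

/-- The system of all wire functions of a circuit. -/
noncomputable def wireFinset (C : Circuit n Ω) : Finset ((Fin n → Bool) → Bool) :=
  (Finset.range (n + C.size)).image fun o x => C.wire x o

lemma computes_wireFinset (C : Circuit n Ω) : C.Computes (wireFinset C) := by
  intro f hf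
  obtain ⟨o, ho, rfl⟩ := Finset.mem_image.1 hf
  exact ⟨o, Finset.mem_range.1 ho, fun x => rfl⟩

end Aux

lemma jumps_le_of {k : ℕ} {F F' : Finset ((Fin k → Bool) → Bool)} :
    ∀ l : List (Fin k → Bool), l.Chain' (· ≤ ·) →
    (∀ a ∈ l, ∀ b ∈ l, a ≤ b →
      (∃ f ∈ F, f a = true ∧ f b = false) → (∃ g ∈ F', g a = true ∧ g b = false)) →
    jumps F l ≤ jumps F' l
  | [] , _, _ => le_refl _
  | [a], _, _ => le_refl _
  | a :: b :: t, hc, himp => by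
    rw [jumps_cons₂, jumps_cons₂]
    have hab : a ≤ b := (List.isChain_cons_cons.1 hc).1
    refine add_le_add ?_ (jumps_le_of (b :: t) (List.isChain_cons_cons.1 hc).2 ?_)
    · by_cases hP : ∃ f ∈ F, f a = true ∧ f b = false
      · rw [if_pos hP, if_pos (himp a (by simp) b (by simp) hab hP)]
      · rw [if_neg hP]
        exact Nat.zero_le _
    · intro a' ha' b' hb' hab' hex
      exact himp a' (by simp [ha']) b' (by simp [hb']) hab' hex

lemma jumps_append {k : ℕ} (F : Finset ((Fin k → Bool) → Bool))
    (l₂ : List (Fin k → Bool)) :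
    ∀ l₁, jumps F (l₁ ++ l₂) ≤ jumps F l₁ + (1 + jumps F l₂)
  | [] => by
    rw [List.nil_append, jumps_nil]
    omega
  | [a] => by
    cases l₂ with
    | nil => simp [jumps_single, jumps_nil]
    | cons b t =>
      show jumps F (a :: b :: t) ≤ jumps F [a] + (1 + jumps F (b :: t))
      rw [jumps_cons₂, jumps_single]
      split <;> omega
  | a :: b :: t => by
    have IH := jumps_append F l₂ (b :: t)
    show jumps F (a :: b :: (t ++ l₂)) ≤ jumps F (a :: b :: t) + (1 + jumps F l₂)
    rw [jumps_cons₂ F a b (t ++ l₂), jumps_cons₂ F a b t]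
    have IH' : jumps F (b :: (t ++ l₂)) ≤ jumps F (b :: t) + (1 + jumps F l₂) := IH
    generalize (if ∃ f ∈ F, f a = true ∧ f b = false then 1 else 0) = c
    omega

lemma dropWhile_head_not {α : Type*} (p : α → Bool) :
    ∀ l : List α, ∀ b rest, l.dropWhile p = b :: rest → p b = false
  | [], b, rest => by simp [List.dropWhile]
  | a :: t, b, rest => by
    intro hd
    rw [List.dropWhile_cons] at hd
    by_cases hpa : p a = true
    · rw [if_pos hpa] at hd
      exact dropWhile_head_not p t b rest hd
    · rw [if_neg hpa] at hd
      injection hd with h1 _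
      subst h1
      simpa using hpa

/-- The key inductive lemma: a circuit with `k` negations bounds the number of
jumps of any computed system along any increasing chain by `2^k - 1`. -/
lemma main_bound (n : ℕ) : ∀ k : ℕ, ∀ C : Circuit n negBasis, C.nonmono.card = k →
    ∀ F : Finset ((Fin n → Bool) → Bool), C.Computes F →
    ∀ l, IsIncChain l → jumps F l ≤ 2 ^ k - 1 := by
  intro k
  induction k with
  | zero =>
    intro C hcard F hcomp l hl
    have hempty : C.nonmono = ∅ := Finset.card_eq_zero.1 hcard
    have hmono : ∀ f ∈ F, Monotone f := by
      intro f hf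
      obtain ⟨o, ho, hfo⟩ := hcomp f hf
      have hm : Monotone fun x => C.wire x o := by
        by_cases h2 : o - n < C.size
        · exact C.wire_mono C.size (by simp [hempty]) o (by omega)
        · by_cases h : o < n
          · exact C.wire_mono C.size (by simp [hempty]) o (by omega)
          · intro x y _
            simp [C.wire_ge _ h h2]
      intro x y hxy
      rw [hfo x, hfo y]
      exact hm hxy
    have h0 : jumps F l ≤ jumps (∅ : Finset ((Fin n → Bool) → Bool)) l := by
      refine jumps_le_of l hl.1 ?_
      rintro a _ b _ hab ⟨f, hf, hfa, hfb⟩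
      have := hmono f hf hab
      rw [hfa, hfb] at this
      exact absurd this (by decide)
    rw [jumps_empty l] at h0
    omega
  | succ k IH =>
    intro C hcard F hcomp l hl
    -- pick the first negation gate
    have hne : C.nonmono.Nonempty := Finset.card_pos.1 (by omega)
    set i₀ : Fin C.size := C.nonmono.min' hne with hi₀def
    have hi₀ : i₀ ∈ C.nonmono := C.nonmono.min'_mem hne
    have hmin : ∀ i ∈ C.nonmono, i₀.val ≤ i.val := fun i hi =>
      C.nonmono.min'_le i hi
    obtain ⟨ω, hω, sel, hg⟩ := C.basis_ok i₀ hi₀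
    rw [negBasis, Set.mem_singleton_iff] at hω
    subst hω
    -- the input of the first negation
    set h : (Fin n → Bool) → Bool := fun x => C.wire x (sel 0).val with hdef
    have hhmono : Monotone h :=
      C.wire_mono i₀.val hmin (sel 0).val (sel 0).isLt
    have Hx : ∀ x, C.wire x (n + i₀.val) = !(h x) := by
      intro x
      rw [C.wire_gate x i₀, hg]
    -- the two restricted circuits
    have hcards : ∀ c, (modC C i₀ c).nonmono.card = k := by
      intro c
      show (C.nonmono.erase i₀).card = k
      rw [Finset.card_erase_of_mem hi₀, hcard]
      omega
    -- split the chain at the point where h switches from false to true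
    set p : (Fin n → Bool) → Bool := fun a => !(h a) with hp
    set l₁ := l.takeWhile p with hl₁def
    set l₂ := l.dropWhile p with hl₂def
    have hsplit : l₁ ++ l₂ = l := List.takeWhile_append_dropWhile (p := p) (l := l)
    have hsub₁ : List.Sublist l₁ l := (List.takeWhile_prefix p).sublist
    have hsub₂ : List.Sublist l₂ l := (List.dropWhile_suffix p).sublist
    have hch₁ : IsIncChain l₁ := ⟨hl.1.sublist hsub₁, hl.2.sublist hsub₁⟩
    have hch₂ : IsIncChain l₂ := ⟨hl.1.sublist hsub₂, hl.2.sublist hsub₂⟩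
    have hmem₁ : ∀ a ∈ l₁, h a = false := by
      intro a ha
      have := List.mem_takeWhile_imp ha
      simpa [hp] using this
    have hmem₂ : ∀ a ∈ l₂, h a = true := by
      intro a ha
      rcases hdw : l₂ with _ | ⟨b, rest⟩
      · rw [hdw] at ha; simp at ha
      · rw [hdw] at ha
        have hb : h b = true := by
          have := dropWhile_head_not p l b rest (by rw [← hl₂def]; exact hdw)
          simpa [hp] using this
        have hpw : (b :: rest).Pairwise (· ≤ ·) :=
          List.isChain_iff_pairwise.1 (hdw ▸ hch₂.1)
        rcases List.mem_cons.1 ha with rfl | ha'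
        · exact hb
        · have hba : b ≤ a := (List.pairwise_cons.1 hpw).1 a ha'
          have hle := hhmono hba
          rw [hb] at hle
          cases hha : h a
          · rw [hha] at hle; exact absurd hle (by decide)
          · rfl
    -- transfer to the restricted circuits
    have key : ∀ (c : Bool) (lp : List (Fin n → Bool)), IsIncChain lp →
        (∀ a ∈ lp, h a = c) → jumps F lp ≤ 2 ^ k - 1 := by
      intro c lp hlp hmem
      have hle : jumps F lp ≤ jumps (wireFinset (modC C i₀ (!c))) lp := by
        refine jumps_le_of lp hlp.1 ?_
        rintro a ha b hb hab ⟨f, hf, hfa, hfb⟩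
        obtain ⟨o, ho, hfo⟩ := hcomp f hf
        refine ⟨fun x => (modC C i₀ (!c)).wire x o, ?_, ?_, ?_⟩
        · exact Finset.mem_image.2 ⟨o, Finset.mem_range.2 ho, rfl⟩
        · show (modC C i₀ (!c)).wire a o = true
          rw [mod_wire_eq C i₀ (!c) a (by rw [Hx a, hmem a ha]) o, ← hfo a]
          exact hfa
        · show (modC C i₀ (!c)).wire b o = false
          rw [mod_wire_eq C i₀ (!c) b (by rw [Hx b, hmem b hb]) o, ← hfo b]
          exact hfb
      calc jumps F lp ≤ jumps (wireFinset (modC C i₀ (!c))) lp := hle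
        _ ≤ 2 ^ k - 1 :=
          IH (modC C i₀ (!c)) (hcards _) _ (computes_wireFinset _) lp hlp
    have b₁ : jumps F l₁ ≤ 2 ^ k - 1 := key false l₁ hch₁ hmem₁
    have b₂ : jumps F l₂ ≤ 2 ^ k - 1 := key true l₂ hch₂ hmem₂
    have happ : jumps F l ≤ jumps F l₁ + (1 + jumps F l₂) := by
      rw [← hsplit]
      exact jumps_append F l₂ l₁
    have hpow : 1 ≤ 2 ^ k := Nat.one_le_two_pow
    have h2p : (2 : ℕ) ^ (k + 1) = 2 * 2 ^ k := by ring
    omega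

lemma decrease_le {n : ℕ} {F : Finset ((Fin n → Bool) → Bool)} {B : ℕ}
    (hB : ∀ l, IsIncChain l → jumps F l ≤ B) : decrease F ≤ B := by
  refine csSup_le ⟨jumps F [], [], ⟨List.isChain_nil, List.Pairwise.nil⟩, rfl⟩ ?_
  rintro m ⟨l, hl, rfl⟩
  exact hB l hl

/-- Markov's theorem, lower bound: any circuit over monotone
functions plus negation computing `F` has at least `⌈log₂(d(F)+1)⌉` negation
gates; equivalently, a circuit with `k` negations only computes systems with
`d(F) ≤ 2^k − 1`. -/
theorem stmt11 (n : ℕ) (F : Finset ((Fin n → Bool) → Bool)) :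
    (∀ C : Circuit n negBasis, C.Computes F →
      Nat.clog 2 (decrease F + 1) ≤ C.nonmono.card) ∧
    (∀ k : ℕ, ∀ C : Circuit n negBasis, C.Computes F → C.nonmono.card = k →
      decrease F ≤ 2 ^ k - 1) := by
  constructor
  · intro C hC
    have hd : decrease F ≤ 2 ^ C.nonmono.card - 1 :=
      decrease_le (main_bound n C.nonmono.card C rfl F hC)
    have hpow : 1 ≤ 2 ^ C.nonmono.card := Nat.one_le_two_pow
    have h1 : decrease F + 1 ≤ 2 ^ C.nonmono.card := by omega
    exact (Nat.clog_le_iff_le_pow (by norm_num)).2 h1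
  · intro k C hC hk
    exact decrease_le (main_bound n k C (by rw [hk]) F hC)
end

section
/- Main theorem: for any complete basis B = M ∪ {ω_1,…,ω_p} with all monotone functions of weight 0 and non-monotone ω_i of weight 1, setting r(B) = max_i d(ω_i) and c(B) = log₂(2r(B)+1) + 1, every finite system F of Boolean functions satisfies ⌈log₂(d(F)+1)⌉ − c(B) ≤ I_B(F) ≤ ⌈log₂(d(F)+1)⌉. -/
namespace MarkovAux

open Classical List

variable {k m : ℕ}

lemma jumps_nil (F : Finset ((Fin k → Bool) → Bool)) : jumps F [] = 0 := rfl

lemma jumps_single (F : Finset ((Fin k → Bool) → Bool)) (a : Fin k → Bool) :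
    jumps F [a] = 0 := rfl

lemma jumps_cons₂ (F : Finset ((Fin k → Bool) → Bool)) (a b : Fin k → Bool)
    (t : List (Fin k → Bool)) :
    jumps F (a :: b :: t)
      = (if ∃ f ∈ F, f a = true ∧ f b = false then 1 else 0) + jumps F (b :: t) := rfl

lemma changes_nil (h : (Fin k → Bool) → Bool) : changes h [] = 0 := rfl

lemma changes_single (h : (Fin k → Bool) → Bool) (a : Fin k → Bool) :
    changes h [a] = 0 := rfl

lemma changes_cons₂ (h : (Fin k → Bool) → Bool) (a b : Fin k → Bool)
    (t : List (Fin k → Bool)) :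
    changes h (a :: b :: t) = (if h a ≠ h b then 1 else 0) + changes h (b :: t) := rfl

lemma jumps_le_length (F : Finset ((Fin k → Bool) → Bool)) :
    ∀ l, jumps F l ≤ l.length := by
  intro l
  induction l with
  | nil => simp [jumps_nil]
  | cons a t ih =>
    cases t with
    | nil => simp [jumps_single]
    | cons b t' =>
      rw [jumps_cons₂]
      simp only [List.length_cons] at *
      split_ifs <;> omega

lemma jumps_imp (F G : Finset ((Fin k → Bool) → Bool))
    (h : ∀ a b, (∃ f ∈ F, f a = true ∧ f b = false) →
      (∃ g ∈ G, g a = true ∧ g b = false)) :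
    ∀ l, jumps F l ≤ jumps G l := by
  intro l
  induction l with
  | nil => simp [jumps_nil]
  | cons a t ih =>
    cases t with
    | nil => simp [jumps_single]
    | cons b t' =>
      rw [jumps_cons₂, jumps_cons₂]
      have hab := h a b
      split_ifs with h1 h2 h2
      · omega
      · exact absurd (hab h1) h2
      · omega
      · omega

lemma jumps_le_three (F G₁ G₂ : Finset ((Fin k → Bool) → Bool))
    (hh : (Fin k → Bool) → Bool)
    (h : ∀ a b, (∃ f ∈ F, f a = true ∧ f b = false) →
      (∃ f ∈ G₁, f a = true ∧ f b = false) ∨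
      (∃ f ∈ G₂, f a = true ∧ f b = false) ∨ hh a ≠ hh b) :
    ∀ l, jumps F l ≤ jumps G₁ l + jumps G₂ l + changes hh l := by
  intro l
  induction l with
  | nil => simp [jumps_nil]
  | cons a t ih =>
    cases t with
    | nil => simp [jumps_single]
    | cons b t' =>
      rw [jumps_cons₂, jumps_cons₂, jumps_cons₂, changes_cons₂]
      have hab := h a b
      split_ifs with h1 h2 h3 h4 <;> try omega
      all_goals (exfalso; rcases hab (by assumption) with h5 | h5 | h5 <;> simp_all)

lemma changes_split (h : (Fin k → Bool) → Bool) :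
    ∀ l, changes h l = jumps {h} l + jumps ({fun x => !(h x)} : Finset _) l := by
  intro l
  induction l with
  | nil => simp [jumps_nil, changes_nil]
  | cons a t ih =>
    cases t with
    | nil => simp [jumps_single, changes_single]
    | cons b t' =>
      rw [changes_cons₂, jumps_cons₂, jumps_cons₂, ih]
      simp only [Finset.mem_singleton, exists_eq_left]
      cases ha : h a <;> cases hb : h b <;> simp [ha, hb] <;> omega

lemma rises_le (h : (Fin k → Bool) → Bool) :
    ∀ (l : List (Fin k → Bool)) a,
      jumps ({fun x => !(h x)} : Finset _) (a :: l)
        ≤ jumps {h} (a :: l) + (if h a = false then 1 else 0) := by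
  intro l
  induction l with
  | nil => intro a; simp [jumps_single]
  | cons b t ih =>
    intro a
    rw [jumps_cons₂, jumps_cons₂]
    have := ih b
    simp only [Finset.mem_singleton, exists_eq_left] at *
    cases ha : h a <;> cases hb : h b <;> simp [ha, hb] at * <;> omega

lemma changes_le (h : (Fin k → Bool) → Bool) (l : List (Fin k → Bool)) :
    changes h l ≤ 2 * jumps {h} l + 1 := by
  cases l with
  | nil => simp [changes_nil]
  | cons a t =>
    rw [changes_split]
    have := rises_le h t a
    split_ifs at this <;> omega

lemma jumps_map (ω : (Fin m → Bool) → Bool) (A : (Fin k → Bool) → (Fin m → Bool)) :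
    ∀ l, jumps {fun x => ω (A x)} l = jumps {ω} (l.map A) := by
  intro l
  induction l with
  | nil => simp [jumps_nil]
  | cons a t ih =>
    cases t with
    | nil => simp [jumps_single, jumps_nil]
    | cons b t' =>
      simp only [List.map_cons]
      rw [jumps_cons₂, jumps_cons₂, ih]
      simp [List.map_cons]

lemma decrease_bdd (F : Finset ((Fin k → Bool) → Bool)) :
    BddAbove {m | ∃ l, IsIncChain l ∧ jumps F l = m} := by
  refine ⟨Fintype.card (Fin k → Bool), ?_⟩
  rintro m ⟨l, ⟨_, hpw⟩, rfl⟩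
  exact (jumps_le_length F l).trans (List.Nodup.length_le_card hpw)

lemma decrease_nonempty (F : Finset ((Fin k → Bool) → Bool)) :
    Set.Nonempty {m | ∃ l, IsIncChain l ∧ jumps F l = m} :=
  ⟨0, [], ⟨List.isChain_nil, List.Pairwise.nil⟩, rfl⟩

lemma exists_chain (ω : (Fin m → Bool) → Bool) :
    ∀ (s : List (Fin m → Bool)) (a), List.Chain' (· ≤ ·) (a :: s) →
      ∃ l', IsIncChain (a :: l') ∧ jumps {ω} (a :: s) ≤ jumps {ω} (a :: l') ∧
        ∀ z ∈ l', a ≤ z ∧ a ≠ z := by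
  intro s
  induction s with
  | nil =>
    intro a _
    exact ⟨[], ⟨List.isChain_singleton _, by simp⟩, le_refl _, by simp⟩
  | cons b t ih =>
    intro a hch
    have hab : a ≤ b := (List.isChain_cons_cons.mp hch).1
    obtain ⟨l', hinc, hle, hall⟩ := ih b (List.isChain_cons_cons.mp hch).2
    by_cases hab2 : a = b
    · subst hab2
      refine ⟨l', hinc, ?_, hall⟩
      rw [jumps_cons₂]
      have hno : ¬ (∃ f ∈ ({ω} : Finset _), f a = true ∧ f a = false) := by simp
      rw [if_neg hno]
      simpa using hle
    · refine ⟨b :: l', ⟨List.isChain_cons_cons.mpr ⟨hab, hinc.1⟩, ?_⟩, ?_, ?_⟩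
      · refine List.pairwise_cons.mpr ⟨?_, hinc.2⟩
        intro z hz
        rcases List.mem_cons.mp hz with rfl | hz'
        · exact hab2
        · intro haz
          have h1 := (hall z hz').1
          have h2 := (hall z hz').2
          exact hab2 (le_antisymm hab (haz ▸ h1))
      · rw [jumps_cons₂, jumps_cons₂]
        exact Nat.add_le_add_left hle _
      · intro z hz
        rcases List.mem_cons.mp hz with rfl | hz'
        · exact ⟨hab, hab2⟩
        · refine ⟨le_trans hab (hall z hz').1, ?_⟩
          intro haz
          exact hab2 (le_antisymm hab (haz ▸ (hall z hz').1))

lemma jumps_le_decrease1 (ω : (Fin m → Bool) → Bool) (l : List (Fin m → Bool))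
    (hl : List.Chain' (· ≤ ·) l) : jumps {ω} l ≤ decrease1 ω := by
  cases l with
  | nil => simp [jumps_nil]
  | cons a s =>
    obtain ⟨l', hinc, hle, _⟩ := exists_chain ω s a hl
    refine hle.trans ?_
    exact le_csSup (decrease_bdd _) ⟨a :: l', hinc, rfl⟩

end MarkovAux
namespace MarkovAux

open Classical List

variable {k m : ℕ}

lemma jumps_snoc_le (F : Finset ((Fin k → Bool) → Bool)) :
    ∀ (L : List (Fin k → Bool)) (y), jumps F L ≤ jumps F (L ++ [y]) := by
  intro L
  induction L with
  | nil => simp [jumps_nil]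
  | cons a t ih =>
    intro y
    cases t with
    | nil => simp [jumps_single]
    | cons b t' =>
      simp only [List.cons_append]
      rw [jumps_cons₂, jumps_cons₂]
      have := ih y
      simp only [List.cons_append] at this
      split_ifs <;> omega

lemma jumps_snoc₂ (F : Finset ((Fin k → Bool) → Bool)) :
    ∀ (L : List (Fin k → Bool)) (x y), jumps F (L ++ [x, y]) = jumps F (L ++ [x]) +
      (if ∃ f ∈ F, f x = true ∧ f y = false then 1 else 0) := by
  intro L
  induction L with
  | nil =>
    intro x y
    simp only [List.nil_append]
    rw [jumps_cons₂, jumps_single, jumps_single]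
    split_ifs <;> omega
  | cons a t ih =>
    intro x y
    cases t with
    | nil =>
      simp only [List.cons_append, List.nil_append]
      rw [jumps_cons₂, jumps_cons₂, jumps_cons₂, jumps_single, jumps_single]
      split_ifs <;> omega
    | cons b t' =>
      simp only [List.cons_append] at *
      rw [jumps_cons₂, jumps_cons₂]
      have := ih x y
      split_ifs at this ⊢ <;> omega

lemma pairwise_le_of_chain {L : List (Fin k → Bool)} (h : List.Chain' (· ≤ ·) L) :
    L.Pairwise (· ≤ ·) := List.isChain_iff_pairwise.mp h

lemma incChain_snoc {L : List (Fin k → Bool)} {y : Fin k → Bool}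
    (h : IsIncChain L) (hy : ∀ z ∈ L, z ≤ y ∧ z ≠ y) : IsIncChain (L ++ [y]) := by
  constructor
  · refine List.isChain_append.mpr ?_
    refine ⟨h.1, List.isChain_singleton _, ?_⟩
    intro a ha b hb
    simp only [List.head?_cons, Option.mem_def, Option.some.injEq] at hb
    subst hb
    exact (hy a (List.mem_of_mem_getLast? ha)).1
  · rw [List.pairwise_append]
    refine ⟨h.2, List.pairwise_singleton _ _, ?_⟩
    intro a ha b hb
    rw [List.mem_singleton] at hb
    subst hb
    exact (hy a ha).2

lemma incChain_snoc₂ {L : List (Fin k → Bool)} {x y : Fin k → Bool}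
    (h : IsIncChain (L ++ [x])) (hxy : x ≤ y) (hne : x ≠ y) :
    IsIncChain ((L ++ [x]) ++ [y]) := by
  refine incChain_snoc h ?_
  intro z hz
  have hzx : z ≤ x := by
    rcases List.mem_append.mp hz with hz' | hz'
    · have := pairwise_le_of_chain h.1
      rw [List.pairwise_append] at this
      exact this.2.2 z hz' x (List.mem_singleton_self x)
    · rw [List.mem_singleton] at hz'; subst hz'; exact le_refl _
  refine ⟨le_trans hzx hxy, ?_⟩
  intro hzy
  subst hzy
  exact hne (_root_.le_antisymm hxy hzx)

/-- `Dfn F x` : maximal number of jumps along an increasing chain ending at `x`. -/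
noncomputable def Dfn (F : Finset ((Fin k → Bool) → Bool)) (x : Fin k → Bool) : ℕ :=
  sSup {m | ∃ l, IsIncChain (l ++ [x]) ∧ jumps F (l ++ [x]) = m}

lemma Dfn_bdd (F : Finset ((Fin k → Bool) → Bool)) (x : Fin k → Bool) :
    BddAbove {m | ∃ l, IsIncChain (l ++ [x]) ∧ jumps F (l ++ [x]) = m} := by
  refine ⟨Fintype.card (Fin k → Bool), ?_⟩
  rintro m ⟨l, ⟨_, hpw⟩, rfl⟩
  exact (jumps_le_length F _).trans (List.Nodup.length_le_card hpw)

lemma Dfn_nonempty (F : Finset ((Fin k → Bool) → Bool)) (x : Fin k → Bool) :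
    Set.Nonempty {m | ∃ l, IsIncChain (l ++ [x]) ∧ jumps F (l ++ [x]) = m} := by
  refine ⟨jumps F [x], [], ?_, rfl⟩
  exact ⟨List.isChain_singleton _, List.pairwise_singleton _ _⟩

lemma Dfn_mem (F : Finset ((Fin k → Bool) → Bool)) (x : Fin k → Bool) :
    ∃ l, IsIncChain (l ++ [x]) ∧ jumps F (l ++ [x]) = Dfn F x :=
  Nat.sSup_mem (Dfn_nonempty F x) (Dfn_bdd F x)

lemma Dfn_le_decrease (F : Finset ((Fin k → Bool) → Bool)) (x : Fin k → Bool) :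
    Dfn F x ≤ decrease F := by
  refine csSup_le (Dfn_nonempty F x) ?_
  rintro m ⟨l, hinc, rfl⟩
  exact le_csSup (decrease_bdd F) ⟨l ++ [x], hinc, rfl⟩

lemma Dfn_mono (F : Finset ((Fin k → Bool) → Bool)) : Monotone (Dfn F) := by
  intro x y hxy
  rcases eq_or_ne x y with rfl | hne
  · exact le_refl _
  obtain ⟨l, hinc, heq⟩ := Dfn_mem F x
  have h2 : IsIncChain ((l ++ [x]) ++ [y]) := incChain_snoc₂ hinc hxy hne
  calc Dfn F x = jumps F (l ++ [x]) := heq.symm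
    _ ≤ jumps F ((l ++ [x]) ++ [y]) := jumps_snoc_le F _ y
    _ ≤ Dfn F y := le_csSup (Dfn_bdd F y) ⟨l ++ [x], h2, rfl⟩

lemma Dfn_lt (F : Finset ((Fin k → Bool) → Bool)) {f : (Fin k → Bool) → Bool}
    (hf : f ∈ F) {x y : Fin k → Bool} (hxy : x ≤ y) (hfx : f x = true)
    (hfy : f y = false) : Dfn F x < Dfn F y := by
  have hne : x ≠ y := by
    intro h; rw [h, hfy] at hfx; exact Bool.false_ne_true hfx
  obtain ⟨l, hinc, heq⟩ := Dfn_mem F x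
  have h2 : IsIncChain ((l ++ [x]) ++ [y]) := incChain_snoc₂ hinc hxy hne
  have h3 : jumps F ((l ++ [x]) ++ [y]) = Dfn F x + 1 := by
    have e : (l ++ [x]) ++ [y] = l ++ [x, y] := by simp
    rw [e, jumps_snoc₂, heq, if_pos ⟨f, hf, hfx, hfy⟩]
  have h4 : Dfn F x + 1 ≤ Dfn F y := by
    rw [← h3]
    exact le_csSup (Dfn_bdd F y) ⟨l ++ [x], h2, rfl⟩
  omega

/-! ### Bit arithmetic -/

/-- The `q`-th binary digit of `m`. -/
def bitb (q n : ℕ) : Bool := decide (n / 2 ^ q % 2 = 1)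

lemma bitb_div (q p n : ℕ) : bitb q (n / 2 ^ p) = bitb (q + p) n := by
  unfold bitb
  rw [Nat.div_div_eq_div_mul, ← pow_add]
  ring_nf

lemma bitsub : ∀ s A B : ℕ, A < 2 ^ s →
    (∀ q < s, bitb q A = true → bitb q B = true) → A ≤ B := by
  intro s
  induction s with
  | zero => intro A B hA _; interval_cases A; omega
  | succ s ih =>
    intro A B hA h
    have h2 : A / 2 ≤ B / 2 := by
      refine ih (A / 2) (B / 2) ?_ ?_
      · have : (2:ℕ) ^ (s+1) = 2 ^ s * 2 := by ring
        omega
      · intro q hq hbit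
        have e1 : (A / 2) = A / 2 ^ 1 := by norm_num
        have e2 : (B / 2) = B / 2 ^ 1 := by norm_num
        rw [e1, bitb_div] at hbit
        rw [e2, bitb_div]
        exact h (q + 1) (by omega) hbit
    have h3 : A % 2 = 1 → B % 2 = 1 := by
      intro hA1
      have := h 0 (by omega)
      unfold bitb at this
      simp only [pow_zero, Nat.div_one] at this
      have := this (by simp [hA1])
      simpa using this
    omega

lemma bit_eq_of_le {s j J : ℕ} (hle : j ≤ J) (hJ : J < 2 ^ s)
    (h : ∀ q < s, bitb q j = false → bitb q J = false) : j = J := by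
  have : J ≤ j := by
    refine bitsub s J j hJ ?_
    intro q hq hbit
    by_contra hc
    have := h q hq (by simpa using hc)
    rw [this] at hbit
    exact Bool.false_ne_true hbit
  omega

lemma mod_ge_iff_bitb (q n : ℕ) : bitb q n = true ↔ 2 ^ q ≤ n % 2 ^ (q + 1) := by
  have e : (2:ℕ) ^ (q+1) = 2 ^ q * 2 := by ring
  have h1 : n % (2 ^ q * 2) = n % 2 ^ q + 2 ^ q * (n / 2 ^ q % 2) := Nat.mod_mul
  have h2 : n % 2 ^ q < 2 ^ q := Nat.mod_lt _ (by positivity)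
  unfold bitb
  rw [e, h1]
  rcases Nat.mod_two_eq_zero_or_one (n / 2 ^ q) with h | h <;> rw [h] <;> simp <;> omega

lemma L1 (s q D : ℕ) (hq : q < s) (hD : D < 2 ^ s) :
    (∃ j, j < 2 ^ s ∧ j ≤ D ∧ bitb q j = true ∧
      ∀ q', q < q' → q' < s → bitb q' j = false → bitb q' D = false)
    ↔ bitb q D = true := by
  constructor
  · rintro ⟨j, hj1, hj2, hj3, hj4⟩
    have hHle : j / 2 ^ (q+1) ≤ D / 2 ^ (q+1) := Nat.div_le_div_right hj2
    have hHge : D / 2 ^ (q+1) ≤ j / 2 ^ (q+1) := by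
      refine bitsub (s - (q+1)) _ _ ?_ ?_
      · have : (2:ℕ) ^ s = 2 ^ (q+1) * 2 ^ (s - (q+1)) := by
          rw [← pow_add]; congr 1; omega
        exact Nat.div_lt_of_lt_mul (by omega)
      · intro p hp hbit
        rw [bitb_div] at hbit ⊢
        by_contra hc
        have h5 := hj4 (p + (q+1)) (by omega) (by omega) (by simpa using hc)
        rw [h5] at hbit
        exact Bool.false_ne_true hbit
    have hH : j / 2 ^ (q+1) = D / 2 ^ (q+1) := le_antisymm hHle hHge
    rw [mod_ge_iff_bitb] at hj3 ⊢
    have d1 := Nat.div_add_mod j (2 ^ (q+1))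
    have d2 := Nat.div_add_mod D (2 ^ (q+1))
    have := Nat.mod_lt D (show 0 < 2 ^ (q+1) by positivity)
    rw [hH] at d1
    omega
  · intro hbit
    refine ⟨2 ^ q * (D / 2 ^ q), ?_, ?_, ?_, ?_⟩
    · have : 2 ^ q * (D / 2 ^ q) ≤ D := Nat.mul_div_le D (2 ^ q)
      omega
    · exact Nat.mul_div_le D (2 ^ q)
    · unfold bitb at hbit ⊢
      rw [Nat.mul_div_cancel_left _ (show 0 < 2 ^ q by positivity)]
      exact hbit
    · intro q' hq1 hq2 hbit'
      have e : 2 ^ q * (D / 2 ^ q) / 2 ^ q' = D / 2 ^ q' := by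
        have e2 : (2:ℕ) ^ q' = 2 ^ q * 2 ^ (q' - q) := by
          rw [← pow_add]; congr 1; omega
        rw [e2, ← Nat.div_div_eq_div_mul, Nat.mul_div_cancel_left _ (show 0 < 2 ^ q by positivity),
          Nat.div_div_eq_div_mul, ← pow_add, show q + (q' - q) = q' by omega]
      unfold bitb at hbit' ⊢
      rw [e] at hbit'
      exact hbit'

lemma L1' (s t Dv : ℕ) (hts : t < s) (hDv : Dv < 2 ^ s) :
    (∃ j, j < 2 ^ s ∧ j ≤ Dv ∧ bitb (s - 1 - t) j = true ∧
      ∀ t', t' < t → (bitb (s - 1 - t') j = false → bitb (s - 1 - t') Dv = false))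
    ↔ bitb (s - 1 - t) Dv = true := by
  rw [← L1 s (s - 1 - t) Dv (by omega) hDv]
  constructor
  · rintro ⟨j, h1, h2, h3, h4⟩
    refine ⟨j, h1, h2, h3, ?_⟩
    intro q' hq1 hq2 hb
    have e : s - 1 - (s - 1 - q') = q' := by omega
    have ht' : s - 1 - q' < t := by omega
    have h5 := h4 (s - 1 - q') ht'
    rw [e] at h5
    exact h5 hb
  · rintro ⟨j, h1, h2, h3, h4⟩
    refine ⟨j, h1, h2, h3, ?_⟩
    intro t' ht' hb
    exact h4 (s - 1 - t') (by omega) (by omega) hb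

end MarkovAux
namespace MarkovAux

open Classical List

variable {n : ℕ} {Ω : Set (Σ m : ℕ, (Fin m → Bool) → Bool)}

lemma wire_lt (C : Circuit n Ω) (x : Fin n → Bool) (j : ℕ) (h : j < n) :
    C.wire x j = x ⟨j, h⟩ := by
  rw [Circuit.wire]
  rw [dif_pos h]

lemma gate_congr (C : Circuit n Ω) (x : Fin n → Bool) (i i' : Fin C.size) (h : i = i') :
    C.gate i (fun t => C.wire x t.val) = C.gate i' (fun t => C.wire x t.val) := by
  subst h; rfl

lemma wire_gate (C : Circuit n Ω) (x : Fin n → Bool) (g : ℕ) (hg : g < C.size) :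
    C.wire x (n + g) = C.gate ⟨g, hg⟩ (fun t => C.wire x t.val) := by
  rw [Circuit.wire]
  rw [dif_neg (by omega : ¬ n + g < n), dif_pos (show n + g - n < C.size by omega)]
  exact gate_congr C x _ _ (Fin.ext (by simp))

lemma wire_high (C : Circuit n Ω) (x : Fin n → Bool) (j : ℕ) (h : n + C.size ≤ j) :
    C.wire x j = false := by
  rw [Circuit.wire]
  rw [dif_neg (by omega : ¬ j < n), dif_neg (by omega : ¬ j - n < C.size)]

lemma wire_monotone (C : Circuit n Ω) (g : ℕ)
    (hg : ∀ i : Fin C.size, i.val < g → Monotone (C.gate i)) :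
    ∀ j, j < n + g → Monotone fun x => C.wire x j := by
  intro j
  induction j using Nat.strong_induction_on with
  | _ j ih =>
    intro hj x y hxy
    simp only
    by_cases h1 : j < n
    · rw [wire_lt C x j h1, wire_lt C y j h1]; exact hxy _
    · by_cases h2 : j - n < C.size
      · obtain ⟨g', rfl⟩ : ∃ g', j = n + g' := ⟨j - n, by omega⟩
        have hg' : g' < C.size := by omega
        rw [wire_gate C x g' hg', wire_gate C y g' hg']
        refine hg ⟨g', hg'⟩ (show g' < g by omega) ?_
        intro t
        have ht : t.val < n + g' := t.isLt
        exact ih t.val (by omega) (by omega) hxy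
      · rw [wire_high C x j (by omega), wire_high C y j (by omega)]

lemma wire_monotone_all (C : Circuit n Ω)
    (hg : ∀ i : Fin C.size, Monotone (C.gate i)) :
    ∀ j, Monotone fun x => C.wire x j := by
  intro j
  by_cases h : j < n + C.size
  · exact wire_monotone C C.size (fun i _ => hg i) j h
  · intro x y _
    show C.wire x j ≤ C.wire y j
    rw [wire_high C x j (by omega), wire_high C y j (by omega)]

lemma jumps_chain_zero (G : Finset ((Fin n → Bool) → Bool))
    (hG : ∀ g ∈ G, Monotone g) :
    ∀ l, List.Chain' (· ≤ ·) l → jumps G l = 0 := by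
  intro l
  induction l with
  | nil => simp [jumps_nil]
  | cons a t ih =>
    intro hch
    cases t with
    | nil => simp [jumps_single]
    | cons b t' =>
      rw [jumps_cons₂]
      have hab : a ≤ b := (List.isChain_cons_cons.mp hch).1
      have hno : ¬ ∃ f ∈ G, f a = true ∧ f b = false := by
        rintro ⟨f, hf, hfa, hfb⟩
        have := hG f hf hab
        rw [hfa, hfb] at this
        exact absurd this (by simp)
      rw [if_neg hno, ih (List.isChain_cons_cons.mp hch).2]

/-- The circuit obtained by replacing gate `g₁` with the constant `c`. -/
def constCirc (C : Circuit n Ω) (g₁ : Fin C.size) (c : Bool) : Circuit n Ω where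
  size := C.size
  gate := fun i => if i = g₁ then (fun _ => c) else C.gate i
  nonmono := C.nonmono.erase g₁
  mono_ok := by
    intro i hi
    by_cases h : i = g₁
    · rw [if_pos h]; exact monotone_const
    · rw [if_neg h]
      refine C.mono_ok i ?_
      intro hmem
      exact hi (Finset.mem_erase.mpr ⟨h, hmem⟩)
  basis_ok := by
    intro i hi
    have h5 := Finset.mem_erase.mp hi
    rw [if_neg h5.1]
    exact C.basis_ok i h5.2

lemma constCirc_wire (C : Circuit n Ω) (g₁ : Fin C.size) (c : Bool) (x : Fin n → Bool)
    (hx : C.wire x (n + g₁.val) = c) :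
    ∀ j, (constCirc C g₁ c).wire x j = C.wire x j := by
  intro j
  induction j using Nat.strong_induction_on with
  | _ j ih =>
    by_cases h1 : j < n
    · rw [wire_lt _ x j h1, wire_lt C x j h1]
    · by_cases h2 : j - n < C.size
      · obtain ⟨g', rfl⟩ : ∃ g', j = n + g' := ⟨j - n, by omega⟩
        have hg' : g' < C.size := by omega
        rw [wire_gate (constCirc C g₁ c) x g' hg', wire_gate C x g' hg']
        by_cases h3 : (⟨g', hg'⟩ : Fin C.size) = g₁
        · show (if (⟨g', hg'⟩ : Fin C.size) = g₁ then (fun _ => c) else C.gate ⟨g', hg'⟩) _ = _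
          rw [if_pos h3]
          have : C.gate ⟨g', hg'⟩ (fun t => C.wire x t.val) = C.wire x (n + g') :=
            (wire_gate C x g' hg').symm
          rw [this]
          have hgv : g' = g₁.val := by rw [← h3]
          rw [hgv, hx]
        · show (if (⟨g', hg'⟩ : Fin C.size) = g₁ then (fun _ => c) else C.gate ⟨g', hg'⟩) _ = _
          rw [if_neg h3]
          congr 1
          funext t
          have ht : t.val < n + g' := t.isLt
          exact ih t.val (by omega)
      · have hsz : (constCirc C g₁ c).size = C.size := rfl
        rw [wire_high _ x j (by omega : n + (constCirc C g₁ c).size ≤ j),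
          wire_high C x j (by omega)]

lemma lemA (r : ℕ) (hr : ∀ ω ∈ Ω, decrease1 ω.2 ≤ r) :
    ∀ (K : ℕ) (C : Circuit n Ω), C.nonmono.card = K → ∀ (O : Finset ℕ)
      (l : List (Fin n → Bool)), IsIncChain l →
      jumps (O.image (fun o => fun x => C.wire x o)) l ≤ (2 * r + 1) * (2 ^ K - 1) := by
  intro K
  induction K with
  | zero =>
    intro C hC O l hl
    have hempty : C.nonmono = ∅ := Finset.card_eq_zero.mp hC
    have hmono : ∀ g ∈ O.image (fun o => fun x => C.wire x o), Monotone g := by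
      rintro g hg
      rw [Finset.mem_image] at hg
      obtain ⟨o, _, rfl⟩ := hg
      exact wire_monotone_all C (fun i => C.mono_ok i (by simp [hempty])) o
    rw [jumps_chain_zero _ hmono l hl.1]
    omega
  | succ K ih =>
    intro C hC O l hl
    have hne : C.nonmono.Nonempty := Finset.card_pos.mp (by omega)
    set g₁ := C.nonmono.min' hne with hg₁
    obtain ⟨ω, hωΩ, sel, hgate⟩ := C.basis_ok g₁ (Finset.min'_mem _ _)
    set h₁ : (Fin n → Bool) → Bool := fun x => C.wire x (n + g₁.val) with hh₁
    have hbelow : ∀ i : Fin C.size, i.val < g₁.val → Monotone (C.gate i) := by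
      intro i hi
      refine C.mono_ok i ?_
      intro hmem
      have := Finset.min'_le _ i hmem
      rw [← hg₁] at this
      rw [Fin.le_def] at this
      omega
    set A : (Fin n → Bool) → (Fin ω.1 → Bool) :=
      fun x => fun jj => C.wire x (sel jj).val with hA
    have hAmono : Monotone A := by
      intro x y hxy jj
      exact wire_monotone C g₁.val hbelow (sel jj).val (sel jj).isLt hxy
    have hh₁eq : h₁ = fun x => ω.2 (A x) := by
      funext x
      rw [hh₁]
      simp only
      rw [wire_gate C x g₁.val g₁.isLt]
      have : (⟨g₁.val, g₁.isLt⟩ : Fin C.size) = g₁ := by ext; rfl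
      rw [this, hgate]
    have hch : changes h₁ l ≤ 2 * r + 1 := by
      have c1 : changes h₁ l ≤ 2 * jumps {h₁} l + 1 := changes_le _ _
      have c2 : jumps {h₁} l = jumps {ω.2} (l.map A) := by
        rw [hh₁eq]; exact jumps_map ω.2 A l
      have c3 : List.Chain' (· ≤ ·) (l.map A) :=
        List.isChain_map_of_isChain A (fun a b hab => hAmono hab) hl.1
      have c4 : jumps {ω.2} (l.map A) ≤ decrease1 ω.2 := jumps_le_decrease1 ω.2 _ c3
      have c5 := hr ω hωΩ
      omega
    have key : ∀ a b,
        (∃ f ∈ O.image (fun o => fun x => C.wire x o), f a = true ∧ f b = false) →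
        (∃ f ∈ O.image (fun o => fun x => (constCirc C g₁ false).wire x o),
            f a = true ∧ f b = false) ∨
        (∃ f ∈ O.image (fun o => fun x => (constCirc C g₁ true).wire x o),
            f a = true ∧ f b = false) ∨ h₁ a ≠ h₁ b := by
      intro a b hdrop
      by_cases hab : h₁ a = h₁ b
      · obtain ⟨g, hg, hga, hgb⟩ := hdrop
        rw [Finset.mem_image] at hg
        obtain ⟨o, hoO, rfl⟩ := hg
        cases hc : h₁ a with
        | false =>
          left
          have hb' : h₁ b = false := by rw [← hab, hc]
          refine ⟨_, Finset.mem_image_of_mem _ hoO, ?_, ?_⟩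
          · rw [constCirc_wire C g₁ false a hc o]; exact hga
          · rw [constCirc_wire C g₁ false b hb' o]; exact hgb
        | true =>
          right; left
          have hb' : h₁ b = true := by rw [← hab, hc]
          refine ⟨_, Finset.mem_image_of_mem _ hoO, ?_, ?_⟩
          · rw [constCirc_wire C g₁ true a hc o]; exact hga
          · rw [constCirc_wire C g₁ true b hb' o]; exact hgb
      · right; right; exact hab
    have main := jumps_le_three _ _ _ h₁ key l
    have hcard : ∀ c : Bool, (constCirc C g₁ c).nonmono.card = K := by
      intro c
      show (C.nonmono.erase g₁).card = K
      rw [Finset.card_erase_of_mem (Finset.min'_mem _ _), hC]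
      omega
    have i0 := ih (constCirc C g₁ false) (hcard false) O l hl
    have i1 := ih (constCirc C g₁ true) (hcard true) O l hl
    obtain ⟨Q, hQ⟩ : ∃ Q, 2 ^ K = Q + 1 := ⟨2 ^ K - 1, by have := Nat.one_le_two_pow (n := K); omega⟩
    have e1 : 2 ^ (K + 1) = 2 * Q + 2 := by rw [pow_succ]; omega
    rw [hQ] at i0 i1
    rw [e1]
    simp only [Nat.add_sub_cancel] at i0 i1
    have e2 : (2 * r + 1) * (2 * Q + 2 - 1) = (2 * r + 1) * Q + (2 * r + 1) * Q + (2 * r + 1) := by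
      have : 2 * Q + 2 - 1 = 2 * Q + 1 := by omega
      rw [this]; ring
    rw [e2]
    omega

end MarkovAux
namespace MarkovAux

open Classical List

lemma bool_le_true {a b : Bool} (h : a ≤ b) (ha : a = true) : b = true := by
  subst ha; cases b
  · exact absurd h (by simp)
  · rfl

lemma neg_gadget_walk {m : ℕ} (ω : (Fin m → Bool) → Bool) :
    ∀ (N : ℕ) (a b : Fin m → Bool),
      (Finset.univ.filter fun i => a i ≠ b i).card ≤ N → a ≤ b → ω a = true →
      ω b = false →
      ∃ w c, w c = false ∧ ω w = true ∧ ω (Function.update w c true) = false := by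
  intro N
  induction N with
  | zero =>
    intro a b hcard hab ha hb
    have hab' : a = b := by
      funext i
      by_contra hi
      have hmem : i ∈ Finset.univ.filter (fun i => a i ≠ b i) := by simp [hi]
      have := Finset.card_pos.mpr ⟨i, hmem⟩
      omega
    rw [hab', hb] at ha
    exact absurd ha (by simp)
  | succ N ihN =>
    intro a b hcard hab ha hb
    by_cases hc : ∃ c, a c ≠ b c
    · obtain ⟨c, hc⟩ := hc
      have hac : a c = false := by
        cases h1 : a c
        · rfl
        · exact absurd (bool_le_true (hab c) h1) (fun h2 => hc (h1.trans h2.symm))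
      have hbc : b c = true := by
        cases h2 : b c
        · exact absurd (hac.trans h2.symm) hc
        · rfl
      set a' := Function.update a c true with ha'
      cases h' : ω a' with
      | false => exact ⟨a, c, hac, ha, h'⟩
      | true =>
        refine ihN a' b ?_ ?_ h' hb
        · have hsub : (Finset.univ.filter fun i => a' i ≠ b i) ⊆
              (Finset.univ.filter fun i => a i ≠ b i).erase c := by
            intro i hi
            simp only [Finset.mem_filter, Finset.mem_univ, true_and] at hi
            rcases eq_or_ne i c with rfl | hic
            · rw [ha', Function.update_self] at hi
              exact absurd hbc.symm hi
            · refine Finset.mem_erase.mpr ⟨hic, ?_⟩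
              rw [ha', Function.update_of_ne hic] at hi
              simp [hi]
          have h6 := Finset.card_le_card hsub
          have hcmem : c ∈ Finset.univ.filter (fun i => a i ≠ b i) := by
            simp [hac, hbc]
          have h7 := Finset.card_erase_of_mem hcmem
          omega
        · intro i
          rw [ha']
          rcases eq_or_ne i c with rfl | hic
          · rw [Function.update_self, hbc]
          · rw [Function.update_of_ne hic]; exact hab i
    · push_neg at hc
      rw [funext hc, hb] at ha
      exact absurd ha (by simp)

lemma neg_gadget {m : ℕ} (ω : (Fin m → Bool) → Bool) (hω : ¬ Monotone ω) :
    ∃ (w : Fin m → Bool) (c : Fin m), w c = false ∧ ω w = true ∧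
      ω (Function.update w c true) = false := by
  rw [Monotone] at hω
  push_neg at hω
  obtain ⟨a, b, hab, hno⟩ := hω
  have ha : ω a = true ∧ ω b = false := by
    cases h1 : ω a <;> cases h2 : ω b <;> rw [h1, h2] at hno <;>
      first
        | exact ⟨rfl, rfl⟩
        | (exact absurd hno (by decide))
  exact neg_gadget_walk ω _ a b (le_refl _) hab ha.1 ha.2

section Upper

variable {n : ℕ}

/-- input part of a wire valuation -/
def xpart {iv : ℕ} (v : Fin (n + iv) → Bool) : Fin n → Bool :=
  fun jn => v ⟨jn.val, by have := jn.isLt; omega⟩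

lemma xpart_le {iv : ℕ} {v v' : Fin (n + iv) → Bool} (h : v ≤ v') :
    xpart v ≤ xpart v' := fun _ => h _

/-- the (monotone) gate computing a bit of `D`. -/
def BProp (s : ℕ) (D : (Fin n → Bool) → ℕ) (iv : ℕ) (v : Fin (n + iv) → Bool) : Prop :=
  ∃ j, j < 2 ^ s ∧ j ≤ D (xpart v) ∧ bitb (s - 1 - (iv - 2) / 2) j = true ∧
    ∀ t' : ℕ, t' < (iv - 2) / 2 → ∀ h2 : n + 3 + 2 * t' < n + iv,
      v ⟨n + 3 + 2 * t', h2⟩ = true ∨ bitb (s - 1 - t') j = true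

/-- the (monotone) gate computing a member of the system. -/
def FProp (s : ℕ) (D : (Fin n → Bool) → ℕ) (f : (Fin n → Bool) → Bool)
    (iv : ℕ) (v : Fin (n + iv) → Bool) : Prop :=
  ∃ j, j < 2 ^ s ∧ (∃ z, z ≤ xpart v ∧ D z = j ∧ f z = true) ∧
    ∀ t' : ℕ, t' < s → ∀ h2 : n + 3 + 2 * t' < n + iv,
      v ⟨n + 3 + 2 * t', h2⟩ = true ∨ bitb (s - 1 - t') j = true

lemma BProp_mono {s : ℕ} {D : (Fin n → Bool) → ℕ} (hD : Monotone D) {iv : ℕ}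
    {v v' : Fin (n + iv) → Bool} (h : v ≤ v') (hB : BProp s D iv v) :
    BProp s D iv v' := by
  obtain ⟨j, h1, h2, h3, h4⟩ := hB
  refine ⟨j, h1, le_trans h2 (hD (xpart_le h)), h3, ?_⟩
  intro t' ht' h2'
  rcases h4 t' ht' h2' with h5 | h5
  · exact Or.inl (bool_le_true (h _) h5)
  · exact Or.inr h5

lemma FProp_mono {s : ℕ} {D : (Fin n → Bool) → ℕ} (hD : Monotone D)
    {f : (Fin n → Bool) → Bool} {iv : ℕ}
    {v v' : Fin (n + iv) → Bool} (h : v ≤ v') (hB : FProp s D f iv v) :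
    FProp s D f iv v' := by
  obtain ⟨j, h1, ⟨z, hz1, hz2, hz3⟩, h4⟩ := hB
  refine ⟨j, h1, ⟨z, le_trans hz1 (xpart_le h), hz2, hz3⟩, ?_⟩
  intro t' ht' h2'
  rcases h4 t' ht' h2' with h5 | h5
  · exact Or.inl (bool_le_true (h _) h5)
  · exact Or.inr h5

variable {Ω : Set (Σ m : ℕ, (Fin m → Bool) → Bool)}

/-- The Markov circuit. -/
noncomputable def bigC (s : ℕ) (D : (Fin n → Bool) → ℕ) (hD : Monotone D)
    (LF : List ((Fin n → Bool) → Bool)) (ωs : Σ m : ℕ, (Fin m → Bool) → Bool)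
    (hωΩ : ωs ∈ Ω) (w : Fin ωs.1 → Bool) (c : Fin ωs.1) : Circuit n Ω where
  size := 2 + 2 * s + LF.length
  gate := fun i =>
    if h0 : i.val = 0 then fun _ => false
    else if h1 : i.val = 1 then fun _ => true
    else if h3 : i.val < 2 + 2 * s then
      if (i.val - 2) % 2 = 0 then
        fun v => if BProp s D i.val v then true else false
      else
        fun v => ωs.2 (fun j => v (if w j then ⟨n + 1, by omega⟩
          else if j = c then ⟨n + i.val - 1, by omega⟩ else ⟨n, by omega⟩))
    else
      fun v => if FProp s D (LF.get ⟨i.val - (2 + 2 * s), by have := i.isLt; omega⟩)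
        i.val v then true else false
  nonmono := Finset.image
    (fun t : Fin s => (⟨3 + 2 * t.val, by have := t.isLt; omega⟩ : Fin (2 + 2 * s + LF.length)))
    Finset.univ
  mono_ok := by
    intro i hi
    by_cases h0 : i.val = 0
    · rw [dif_pos h0]; exact monotone_const
    rw [dif_neg h0]
    by_cases h1 : i.val = 1
    · rw [dif_pos h1]; exact monotone_const
    rw [dif_neg h1]
    by_cases h3 : i.val < 2 + 2 * s
    · rw [dif_pos h3]
      by_cases hpar : (i.val - 2) % 2 = 0
      · rw [if_pos hpar]
        intro v v' hv
        dsimp only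
        by_cases hB : BProp s D i.val v
        · rw [if_pos hB, if_pos (BProp_mono hD hv hB)]
        · rw [if_neg hB]; exact Bool.false_le _
      · exfalso
        refine hi (Finset.mem_image.mpr ⟨⟨(i.val - 3) / 2, by omega⟩, Finset.mem_univ _, ?_⟩)
        apply Fin.ext
        show 3 + 2 * ((i.val - 3) / 2) = i.val
        omega
    · rw [dif_neg h3]
      intro v v' hv
      dsimp only
      by_cases hB : FProp s D (LF.get ⟨i.val - (2 + 2 * s), by have := i.isLt; omega⟩) i.val v
      · rw [if_pos hB, if_pos (FProp_mono hD hv hB)]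
      · rw [if_neg hB]; exact Bool.false_le _
  basis_ok := by
    intro i hi
    obtain ⟨t0, _, ht0⟩ := Finset.mem_image.mp hi
    have hv : i.val = 3 + 2 * t0.val := by rw [← ht0]
    have ht0s := t0.isLt
    refine ⟨ωs, hωΩ, fun j => if w j then ⟨n + 1, by omega⟩
      else if j = c then ⟨n + i.val - 1, by omega⟩ else ⟨n, by omega⟩, ?_⟩
    dsimp only
    rw [dif_neg (by omega : ¬ i.val = 0), dif_neg (by omega : ¬ i.val = 1),
      dif_pos (by omega : i.val < 2 + 2 * s),
      if_neg (by omega : ¬ (i.val - 2) % 2 = 0)]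

end Upper

end MarkovAux
namespace MarkovAux

open Classical List

section Wires

variable {n : ℕ} {Ω : Set (Σ m : ℕ, (Fin m → Bool) → Bool)}
variable (s : ℕ) (D : (Fin n → Bool) → ℕ) (hD : Monotone D)
variable (LF : List ((Fin n → Bool) → Bool)) (ωs : Σ m : ℕ, (Fin m → Bool) → Bool)
variable (hωΩ : ωs ∈ Ω) (w : Fin ωs.1 → Bool) (c : Fin ωs.1)

lemma bigC_size : (bigC (Ω := Ω) s D hD LF ωs hωΩ w c).size = 2 + 2 * s + LF.length := rfl

lemma bigC_wire0 (x : Fin n → Bool) :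
    (bigC (Ω := Ω) s D hD LF ωs hωΩ w c).wire x (n + 0) = false := by
  rw [wire_gate _ x 0 (show 0 < 2 + 2 * s + LF.length by omega)]
  rfl

lemma bigC_wire1 (x : Fin n → Bool) :
    (bigC (Ω := Ω) s D hD LF ωs hωΩ w c).wire x (n + 1) = true := by
  rw [wire_gate _ x 1 (show 1 < 2 + 2 * s + LF.length by omega)]
  rfl

lemma bigC_gate_bit (g : ℕ) (h0 : ¬ g = 0) (h1 : ¬ g = 1) (h3 : g < 2 + 2 * s)
    (hpar : (g - 2) % 2 = 0) (hg : g < 2 + 2 * s + LF.length) (v : Fin (n + g) → Bool) :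
    (bigC (Ω := Ω) s D hD LF ωs hωΩ w c).gate ⟨g, hg⟩ v
      = if BProp s D g v then true else false := by
  simp only [bigC]
  rw [dif_neg (show ¬(g = 0) from h0), dif_neg (show ¬(g = 1) from h1),
    dif_pos (show g < 2 + 2 * s from h3), if_pos (show (g - 2) % 2 = 0 from hpar)]

lemma bigC_gate_neg (g : ℕ) (h0 : ¬ g = 0) (h1 : ¬ g = 1) (h3 : g < 2 + 2 * s)
    (hpar : ¬ (g - 2) % 2 = 0) (hg : g < 2 + 2 * s + LF.length) (v : Fin (n + g) → Bool) :
    (bigC (Ω := Ω) s D hD LF ωs hωΩ w c).gate ⟨g, hg⟩ v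
      = ωs.2 (fun j => v (if w j then ⟨n + 1, by omega⟩
          else if j = c then ⟨n + g - 1, by omega⟩ else ⟨n, by omega⟩)) := by
  simp only [bigC]
  rw [dif_neg (show ¬(g = 0) from h0), dif_neg (show ¬(g = 1) from h1),
    dif_pos (show g < 2 + 2 * s from h3), if_neg (show ¬ (g - 2) % 2 = 0 from hpar)]

lemma bigC_gate_F (g : ℕ) (h3 : ¬ g < 2 + 2 * s) (hg : g < 2 + 2 * s + LF.length)
    (v : Fin (n + g) → Bool) :
    (bigC (Ω := Ω) s D hD LF ωs hωΩ w c).gate ⟨g, hg⟩ v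
      = if FProp s D (LF.get ⟨g - (2 + 2 * s), by omega⟩) g v then true else false := by
  simp only [bigC]
  rw [dif_neg (show ¬(g = 0) by omega), dif_neg (show ¬(g = 1) by omega),
    dif_neg (show ¬ g < 2 + 2 * s from h3)]

lemma bigC_wire_bits (hwc : w c = false) (hw1 : ωs.2 w = true)
    (hw0 : ωs.2 (Function.update w c true) = false) (hDlt : ∀ y, D y < 2 ^ s)
    (x : Fin n → Bool) :
    ∀ t, t < s →
      (bigC (Ω := Ω) s D hD LF ωs hωΩ w c).wire x (n + (2 + 2 * t))
          = bitb (s - 1 - t) (D x) ∧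
      (bigC (Ω := Ω) s D hD LF ωs hωΩ w c).wire x (n + (3 + 2 * t))
          = !(bitb (s - 1 - t) (D x)) := by
  intro t
  induction t using Nat.strong_induction_on with
  | _ t ih =>
    intro hts
    have hbit : (bigC (Ω := Ω) s D hD LF ωs hωΩ w c).wire x (n + (2 + 2 * t)) = bitb (s - 1 - t) (D x) := by
      rw [wire_gate _ x (2 + 2 * t) (show 2 + 2 * t < 2 + 2 * s + LF.length by omega)]
      rw [bigC_gate_bit s D hD LF ωs hωΩ w c (2 + 2 * t) (by omega) (by omega) (by omega)
        (by omega) _ _]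
      set varg := fun tt : Fin (n + (2 + 2 * t)) => (bigC (Ω := Ω) s D hD LF ωs hωΩ w c).wire x tt.val with hvarg
      have hxp : xpart varg = x := by
        funext jn
        show (bigC (Ω := Ω) s D hD LF ωs hωΩ w c).wire x jn.val = x jn
        rw [wire_lt _ x jn.val jn.isLt]
      have hiff : BProp s D (2 + 2 * t) varg ↔ bitb (s - 1 - t) (D x) = true := by
        unfold BProp
        rw [hxp]
        simp only [show (2 + 2 * t - 2) / 2 = t from by omega]
        rw [← L1' s t (D x) hts (hDlt x)]
        constructor
        · rintro ⟨j, h1, h2, h3, h4⟩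
          refine ⟨j, h1, h2, h3, ?_⟩
          intro t' ht' hb
          have h2' : n + 3 + 2 * t' < n + (2 + 2 * t) := by omega
          rcases h4 t' ht' h2' with h5 | h5
          · have hw' : (bigC (Ω := Ω) s D hD LF ωs hωΩ w c).wire x (n + 3 + 2 * t') = !(bitb (s - 1 - t') (D x)) := by
              have e : n + 3 + 2 * t' = n + (3 + 2 * t') := by omega
              rw [e]
              exact (ih t' (by omega) (by omega)).2
            have h5' : (bigC (Ω := Ω) s D hD LF ωs hωΩ w c).wire x (n + 3 + 2 * t') = true := h5
            rw [hw'] at h5'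
            simpa using h5'
          · rw [h5] at hb
            exact absurd hb (by simp)
        · rintro ⟨j, h1, h2, h3, h4⟩
          refine ⟨j, h1, h2, h3, ?_⟩
          intro t' ht' h2'
          cases hbj : bitb (s - 1 - t') j
          · left
            have hDb := h4 t' ht' hbj
            show (bigC (Ω := Ω) s D hD LF ωs hωΩ w c).wire x (n + 3 + 2 * t') = true
            have e : n + 3 + 2 * t' = n + (3 + 2 * t') := by omega
            rw [e, (ih t' (by omega) (by omega)).2, hDb]
            rfl
          · right; rfl
      cases hbv : bitb (s - 1 - t) (D x)
      · have hnp : ¬ BProp s D (2 + 2 * t) varg := by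
          intro hp
          exact absurd (hiff.mp hp) (by rw [hbv]; simp)
        rw [if_neg hnp]
      · rw [if_pos (hiff.mpr hbv)]
    refine ⟨hbit, ?_⟩
    rw [wire_gate _ x (3 + 2 * t) (show 3 + 2 * t < 2 + 2 * s + LF.length by omega)]
    rw [bigC_gate_neg s D hD LF ωs hωΩ w c (3 + 2 * t) (by omega) (by omega) (by omega)
      (by omega) _ _]
    have harg : (fun j => (fun tt : Fin (n + (3 + 2 * t)) => (bigC (Ω := Ω) s D hD LF ωs hωΩ w c).wire x tt.val)
        (if w j then ⟨n + 1, by omega⟩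
          else if j = c then ⟨n + (3 + 2 * t) - 1, by omega⟩ else ⟨n, by omega⟩))
        = (if bitb (s - 1 - t) (D x) then Function.update w c true else w) := by
      funext j
      by_cases hwj : w j
      · rw [if_pos hwj]
        have hl : (bigC (Ω := Ω) s D hD LF ωs hωΩ w c).wire x (n + 1) = true := bigC_wire1 s D hD LF ωs hωΩ w c x
        show (bigC (Ω := Ω) s D hD LF ωs hωΩ w c).wire x (n + 1) = _
        rw [hl]
        have hjc : j ≠ c := by intro h; rw [h, hwc] at hwj; exact Bool.false_ne_true hwj
        cases hbv : bitb (s - 1 - t) (D x)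
        · rw [if_neg (show ¬(false = true) by simp)]
          exact hwj.symm
        · rw [if_pos rfl]
          rw [Function.update_of_ne hjc]
          exact hwj.symm
      · rw [if_neg hwj]
        by_cases hjc : j = c
        · rw [if_pos hjc]
          show (bigC (Ω := Ω) s D hD LF ωs hωΩ w c).wire x (n + (3 + 2 * t) - 1) = _
          have e : n + (3 + 2 * t) - 1 = n + (2 + 2 * t) := by omega
          rw [e, hbit, hjc]
          cases hbv : bitb (s - 1 - t) (D x)
          · rw [if_neg (show ¬(false = true) by simp)]
            exact hwc.symm
          · rw [if_pos rfl, Function.update_self]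
        · rw [if_neg hjc]
          show (bigC (Ω := Ω) s D hD LF ωs hωΩ w c).wire x n = _
          have h00 : (bigC (Ω := Ω) s D hD LF ωs hωΩ w c).wire x n = false := bigC_wire0 s D hD LF ωs hωΩ w c x
          rw [h00]
          cases hbv : bitb (s - 1 - t) (D x)
          · rw [if_neg (show ¬(false = true) by simp)]
            cases hwj2 : w j
            · rfl
            · exact absurd hwj2 hwj
          · rw [if_pos rfl, Function.update_of_ne hjc]
            cases hwj2 : w j
            · rfl
            · exact absurd hwj2 hwj
    rw [harg]
    cases hbv : bitb (s - 1 - t) (D x)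
    · rw [if_neg (show ¬(false = true) by simp)]
      rw [hw1]; rfl
    · rw [if_pos rfl, hw0]; rfl

end Wires

end MarkovAux
namespace MarkovAux

open Classical List

section Wires2

variable {n : ℕ} {Ω : Set (Σ m : ℕ, (Fin m → Bool) → Bool)}
variable (s : ℕ) (D : (Fin n → Bool) → ℕ) (hD : Monotone D)
variable (LF : List ((Fin n → Bool) → Bool)) (ωs : Σ m : ℕ, (Fin m → Bool) → Bool)
variable (hωΩ : ωs ∈ Ω) (w : Fin ωs.1 → Bool) (c : Fin ωs.1)

lemma bigC_wire_F (hwc : w c = false) (hw1 : ωs.2 w = true)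
    (hw0 : ωs.2 (Function.update w c true) = false) (hDlt : ∀ y, D y < 2 ^ s)
    (hdrop : ∀ f ∈ LF, ∀ z y, z ≤ y → f z = true → f y = false → D z ≠ D y)
    (x : Fin n → Bool) (u : ℕ) (hu : u < LF.length) :
    (bigC (Ω := Ω) s D hD LF ωs hωΩ w c).wire x (n + (2 + 2 * s + u))
      = LF.get ⟨u, hu⟩ x := by
  rw [wire_gate _ x (2 + 2 * s + u) (show 2 + 2 * s + u < 2 + 2 * s + LF.length by omega)]
  rw [bigC_gate_F s D hD LF ωs hωΩ w c (2 + 2 * s + u) (by omega) _ _]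
  have eget : (LF.get ⟨2 + 2 * s + u - (2 + 2 * s), by omega⟩) = LF.get ⟨u, hu⟩ := by
    congr 1
    apply Fin.ext
    show 2 + 2 * s + u - (2 + 2 * s) = u
    omega
  rw [eget]
  set f := LF.get ⟨u, hu⟩ with hf
  set varg := fun tt : Fin (n + (2 + 2 * s + u)) =>
    (bigC (Ω := Ω) s D hD LF ωs hωΩ w c).wire x tt.val with hvarg
  have hxp : xpart varg = x := by
    funext jn
    show (bigC (Ω := Ω) s D hD LF ωs hωΩ w c).wire x jn.val = x jn
    rw [wire_lt _ x jn.val jn.isLt]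
  have hiff : FProp s D f (2 + 2 * s + u) varg ↔ f x = true := by
    unfold FProp
    rw [hxp]
    constructor
    · rintro ⟨j, h1, ⟨z, hz1, hz2, hz3⟩, h4⟩
      have hjledx : j ≤ D x := by rw [← hz2]; exact hD hz1
      have hbits : ∀ q < s, bitb q j = false → bitb q (D x) = false := by
        intro q hq hbj
        have ht' : s - 1 - q < s := by omega
        have e : s - 1 - (s - 1 - q) = q := by omega
        have h2' : n + 3 + 2 * (s - 1 - q) < n + (2 + 2 * s + u) := by omega
        rcases h4 (s - 1 - q) ht' h2' with h5 | h5
        · have hw' : (bigC (Ω := Ω) s D hD LF ωs hωΩ w c).wire x (n + 3 + 2 * (s - 1 - q))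
              = !(bitb (s - 1 - (s - 1 - q)) (D x)) := by
            have e2 : n + 3 + 2 * (s - 1 - q) = n + (3 + 2 * (s - 1 - q)) := by omega
            rw [e2]
            exact (bigC_wire_bits s D hD LF ωs hωΩ w c hwc hw1 hw0 hDlt x (s - 1 - q) ht').2
          have h5' : (bigC (Ω := Ω) s D hD LF ωs hωΩ w c).wire x (n + 3 + 2 * (s - 1 - q))
              = true := h5
          rw [hw', e] at h5'
          simpa using h5'
        · rw [e] at h5
          rw [h5] at hbj
          exact absurd hbj (by simp)
      have hj : j = D x := bit_eq_of_le hjledx (hDlt x) hbits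
      by_contra hfx
      have hfx' : f x = false := by
        cases hfx2 : f x
        · rfl
        · exact absurd hfx2 hfx
      exact (hdrop f (by rw [hf]; exact List.get_mem _ _) z x hz1 hz3 hfx') (by rw [hz2, hj])
    · intro hfx
      refine ⟨D x, hDlt x, ⟨x, le_refl x, rfl, hfx⟩, ?_⟩
      intro t' ht' h2'
      cases hbt : bitb (s - 1 - t') (D x)
      · left
        have e2 : n + 3 + 2 * t' = n + (3 + 2 * t') := by omega
        show (bigC (Ω := Ω) s D hD LF ωs hωΩ w c).wire x (n + 3 + 2 * t') = true
        rw [e2, (bigC_wire_bits s D hD LF ωs hωΩ w c hwc hw1 hw0 hDlt x t' ht').2, hbt]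
        rfl
      · right; rfl
  cases hfv : f x
  · rw [if_neg (fun hp => absurd (hiff.mp hp) (by rw [hfv]; simp))]
  · rw [if_pos (hiff.mpr hfv)]

lemma bigC_card :
    (bigC (Ω := Ω) s D hD LF ωs hωΩ w c).nonmono.card = s := by
  show (Finset.image (fun t : Fin s => (⟨3 + 2 * t.val, by have := t.isLt; omega⟩ : Fin (2 + 2 * s + LF.length))) Finset.univ).card = s
  rw [Finset.card_image_of_injective _ ?_, Finset.card_univ, Fintype.card_fin]
  intro a b hab
  apply Fin.ext
  have h1 : (3 + 2 * a.val) = 3 + 2 * b.val := congrArg Fin.val hab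
  omega

lemma bigC_computes (F : Finset ((Fin n → Bool) → Bool)) (hLF : LF = F.toList)
    (hwc : w c = false) (hw1 : ωs.2 w = true)
    (hw0 : ωs.2 (Function.update w c true) = false) (hDlt : ∀ y, D y < 2 ^ s)
    (hdrop : ∀ f ∈ LF, ∀ z y, z ≤ y → f z = true → f y = false → D z ≠ D y) :
    (bigC (Ω := Ω) s D hD LF ωs hωΩ w c).Computes F := by
  intro f hf
  have hfl : f ∈ LF := by rw [hLF]; exact Finset.mem_toList.mpr hf
  obtain ⟨u, hu⟩ := List.mem_iff_get.mp hfl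
  refine ⟨n + (2 + 2 * s + u.val), by have := u.isLt; show _ < n + (2 + 2 * s + LF.length); omega, ?_⟩
  intro x
  rw [bigC_wire_F s D hD LF ωs hωΩ w c hwc hw1 hw0 hDlt hdrop x u.val u.isLt]
  have e : (⟨u.val, u.isLt⟩ : Fin LF.length) = u := by apply Fin.ext; rfl
  rw [e, hu]

end Wires2

lemma upper_exists {n : ℕ} {Ω : Set (Σ m : ℕ, (Fin m → Bool) → Bool)}
    (hne : Ω.Nonempty) (hnm : ∀ ω ∈ Ω, ¬ Monotone ω.2)
    (F : Finset ((Fin n → Bool) → Bool)) :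
    ∃ C : Circuit n Ω, C.Computes F ∧ C.nonmono.card = Nat.clog 2 (decrease F + 1) := by
  obtain ⟨ωs, hωΩ⟩ := hne
  obtain ⟨w, c, hwc, hw1, hw0⟩ := neg_gadget ωs.2 (hnm ωs hωΩ)
  set s := Nat.clog 2 (decrease F + 1) with hs
  have h2s : decrease F + 1 ≤ 2 ^ s := Nat.le_pow_clog (by norm_num) _
  have hDlt : ∀ y, Dfn F y < 2 ^ s := fun y => by
    have := Dfn_le_decrease F y; omega
  have hdrop : ∀ f ∈ F.toList, ∀ z y, z ≤ y → f z = true → f y = false →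
      Dfn F z ≠ Dfn F y := by
    intro f hf z y hzy h1 h0
    have := Dfn_lt F (Finset.mem_toList.mp hf) hzy h1 h0
    omega
  exact ⟨bigC s (Dfn F) (Dfn_mono F) F.toList ωs hωΩ w c,
    bigC_computes s (Dfn F) (Dfn_mono F) F.toList ωs hωΩ w c F rfl hwc hw1 hw0 hDlt hdrop,
    bigC_card s (Dfn F) (Dfn_mono F) F.toList ωs hωΩ w c⟩

end MarkovAux
/-- main theorem: for any basis `B = M ∪ Ω` with `Ω` a finite
nonempty set of non-monotone functions, setting `r = max_{ω ∈ Ω} d(ω)` and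
`c(B) = log₂(2r+1) + 1`, every system `F` satisfies
`⌈log₂(d(F)+1)⌉ − c(B) ≤ I_B(F) ≤ ⌈log₂(d(F)+1)⌉`. -/
theorem stmt16 (n : ℕ) (Ω : Set (Σ m : ℕ, (Fin m → Bool) → Bool))
    (hfin : Ω.Finite) (hne : Ω.Nonempty)
    (hnm : ∀ ω ∈ Ω, ¬ Monotone ω.2)
    (r : ℕ) (hr : ∀ ω ∈ Ω, decrease1 ω.2 ≤ r)
    (hrmax : ∃ ω ∈ Ω, decrease1 ω.2 = r)
    (F : Finset ((Fin n → Bool) → Bool)) :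
    (⌈Real.logb 2 ((decrease F : ℝ) + 1)⌉ : ℝ)
        - (Real.logb 2 (2 * (r : ℝ) + 1) + 1) ≤ (invCompl n Ω F : ℝ) ∧
    (invCompl n Ω F : ℝ) ≤ (⌈Real.logb 2 ((decrease F : ℝ) + 1)⌉ : ℝ) := by
  classical
  open MarkovAux in
  set d := decrease F with hd
  set s := Nat.clog 2 (d + 1) with hs
  obtain ⟨CU, hCU, hCUcard⟩ := MarkovAux.upper_exists hne hnm F
  have hmem : s ∈ {k | ∃ C : Circuit n Ω, C.Computes F ∧ C.nonmono.card = k} :=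
    ⟨CU, hCU, hCUcard⟩
  have hinv_le : invCompl n Ω F ≤ s := Nat.sInf_le hmem
  have hceil : (⌈Real.logb 2 ((d : ℝ) + 1)⌉ : ℤ) = (s : ℤ) := by
    have e1 : ((d : ℝ) + 1) = ((d + 1 : ℕ) : ℝ) := by push_cast; ring
    have e0 : (2 : ℝ) = ((2 : ℕ) : ℝ) := by norm_num
    rw [e1, e0, Real.ceil_logb_natCast (by positivity), Int.clog_natCast]
  have hceilR : ((⌈Real.logb 2 ((d : ℝ) + 1)⌉ : ℤ) : ℝ) = (s : ℝ) := by
    exact_mod_cast hceil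
  have hupper : (invCompl n Ω F : ℝ) ≤ ((⌈Real.logb 2 ((d : ℝ) + 1)⌉ : ℤ) : ℝ) := by
    rw [hceilR]
    exact_mod_cast hinv_le
  refine ⟨?_, hupper⟩
  set K := invCompl n Ω F with hK
  obtain ⟨C, hC, hCcard⟩ : ∃ C : Circuit n Ω, C.Computes F ∧ C.nonmono.card = K := by
    have := Nat.sInf_mem (⟨s, hmem⟩ :
      {k | ∃ C : Circuit n Ω, C.Computes F ∧ C.nonmono.card = k}.Nonempty)
    exact this
  have hdle : d ≤ (2 * r + 1) * (2 ^ K - 1) := by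
    rw [hd]
    refine csSup_le (MarkovAux.decrease_nonempty F) ?_
    rintro m ⟨l, hl, rfl⟩
    have h1 : jumps F l ≤ jumps ((Finset.range (n + C.size)).image
        (fun o => fun x => C.wire x o)) l := by
      refine MarkovAux.jumps_imp _ _ ?_ l
      rintro a b ⟨f, hf, hfa, hfb⟩
      obtain ⟨o, ho, hfo⟩ := hC f hf
      refine ⟨fun x => C.wire x o,
        Finset.mem_image_of_mem _ (Finset.mem_range.mpr ho), ?_, ?_⟩
      · show C.wire a o = true
        rw [← hfo a]; exact hfa
      · show C.wire b o = false
        rw [← hfo b]; exact hfb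
    have h2 := MarkovAux.lemA r hr K C hCcard (Finset.range (n + C.size)) l hl
    omega
  have hrpos : (0 : ℝ) < 2 * (r : ℝ) + 1 := by positivity
  have hdlt : (d : ℝ) + 1 ≤ (2 * (r : ℝ) + 1) * 2 ^ K := by
    have h1 : d + 1 ≤ (2 * r + 1) * 2 ^ K := by
      obtain ⟨Q, hQ⟩ : ∃ Q, 2 ^ K = Q + 1 :=
        ⟨2 ^ K - 1, by have := Nat.one_le_two_pow (n := K); omega⟩
      rw [hQ] at hdle ⊢
      have e : (2 * r + 1) * (Q + 1) = (2 * r + 1) * Q + (2 * r + 1) := by ring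
      have e2 : (2 * r + 1) * (Q + 1 - 1) = (2 * r + 1) * Q := by simp
      rw [e2] at hdle
      omega
    calc (d : ℝ) + 1 = ((d + 1 : ℕ) : ℝ) := by push_cast; ring
      _ ≤ (((2 * r + 1) * 2 ^ K : ℕ) : ℝ) := by exact_mod_cast h1
      _ = (2 * (r : ℝ) + 1) * 2 ^ K := by push_cast; ring
  have hlog : Real.logb 2 ((d : ℝ) + 1) ≤ Real.logb 2 (2 * (r : ℝ) + 1) + K := by
    have h1 : Real.logb 2 ((d : ℝ) + 1) ≤ Real.logb 2 ((2 * (r : ℝ) + 1) * 2 ^ K) :=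
      Real.logb_le_logb_of_le (by norm_num) (by positivity) hdlt
    have h2 : Real.logb 2 ((2 * (r : ℝ) + 1) * 2 ^ K)
        = Real.logb 2 (2 * (r : ℝ) + 1) + K := by
      rw [Real.logb_mul (ne_of_gt hrpos) (by positivity), Real.logb_pow,
        Real.logb_self_eq_one (b := 2) (by norm_num)]
      ring
    linarith
  have hceil2 : ((⌈Real.logb 2 ((d : ℝ) + 1)⌉ : ℤ) : ℝ) ≤ Real.logb 2 ((d : ℝ) + 1) + 1 :=
    le_of_lt (Int.ceil_lt_add_one _)
  linarith
end

section
/- Splitting lemma: let C = (α_1, …, α_s) be an increasing chain in {0,1}^n and h : {0,1}^n → {0,1} any function. Let C₀ be the subsequence of indices j with h(α_j) = 0 and C₁ the subsequence with h(α_j) = 1. Then the sequences ((h(α_j), α_j)) restricted to C₀ and to C₁ are each increasing chains in {0,1}^{n+1}, and for any system F, d_C(F) ≤ d_{C₀'}(F') + d_{C₁'}(F') + (number of indices i with h(α_i) ≠ h(α_{i+1})), where F' is any system on {0,1}^{n+1} with f(x) = f'(h(x), x) for each f ∈ F and corresponding f' ∈ F'. -/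
lemma jumps_cons_cons {k : ℕ} (F : Finset ((Fin k → Bool) → Bool)) (a b t) :
    jumps F (a :: b :: t) =
      (if ∃ f ∈ F, f a = true ∧ f b = false then 1 else 0) + jumps F (b :: t) := rfl

lemma changes_cons_cons {k : ℕ} (h : (Fin k → Bool) → Bool) (a b t) :
    changes h (a :: b :: t) = (if h a ≠ h b then 1 else 0) + changes h (b :: t) := rfl

lemma jumps_tail_le {k : ℕ} (F : Finset ((Fin k → Bool) → Bool)) (x : Fin k → Bool)
    (s : List (Fin k → Bool)) : jumps F s ≤ jumps F (x :: s) := by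
  cases s <;> simp [jumps]

lemma isIncChain_iff_lt {k : ℕ} (l : List (Fin k → Bool)) :
    IsIncChain l ↔ l.Pairwise (· < ·) := by
  constructor
  · rintro ⟨hc, hp⟩
    replace hc := List.isChain_iff_pairwise.mp hc
    exact (hc.and hp).imp fun ⟨h1, h2⟩ => lt_of_le_of_ne h1 h2
  · intro hp
    exact ⟨List.isChain_iff_pairwise.mpr (hp.imp le_of_lt), hp.imp ne_of_lt⟩

lemma isIncChain_part {n : ℕ} (l : List (Fin n → Bool)) (hl : IsIncChain l)
    (h : (Fin n → Bool) → Bool) (c : Bool) :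
    IsIncChain ((l.filter (fun a => h a = c)).map (fun a => Fin.cons (h a) a)) := by
  rw [isIncChain_iff_lt] at hl ⊢
  rw [List.pairwise_map]
  refine List.Pairwise.imp_of_mem ?_ (hl.filter _)
  intro a b ha hb hab
  have ha' : h a = c := by simpa using List.of_mem_filter ha
  have hb' : h b = c := by simpa using List.of_mem_filter hb
  rw [ha', hb']
  refine lt_of_le_of_ne (Fin.cons_le_cons.mpr ⟨le_rfl, le_of_lt hab⟩) ?_
  intro he
  have : a = b := by
    funext i
    have := congrFun he i.succ
    simpa using this
  exact absurd this (ne_of_lt hab)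

lemma jumps_split {n : ℕ} (h : (Fin n → Bool) → Bool)
    (F : Finset ((Fin n → Bool) → Bool))
    (F' : Finset ((Fin (n + 1) → Bool) → Bool))
    (hcorr : ∀ f ∈ F, ∃ f' ∈ F', ∀ x, f x = f' (Fin.cons (h x) x)) :
    ∀ l : List (Fin n → Bool),
    jumps F l ≤
      jumps F' ((l.filter (fun a => h a = false)).map (fun a => Fin.cons (h a) a)) +
      jumps F' ((l.filter (fun a => h a = true)).map (fun a => Fin.cons (h a) a)) +
      changes h l := by
  intro l
  induction l with
  | nil => simp [jumps, changes]
  | cons a t ih =>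
    cases t with
    | nil =>
      by_cases ha : h a = true <;> simp [jumps, changes, ha, List.filter_cons]
    | cons b t =>
      have hind : (if ∃ f ∈ F, f a = true ∧ f b = false then 1 else 0) ≤
          (if ∃ f' ∈ F', f' (Fin.cons (h a) a) = true ∧ f' (Fin.cons (h b) b) = false
            then 1 else 0) := by
        split
        · next hj =>
          obtain ⟨f, hf, h1, h2⟩ := hj
          obtain ⟨f', hf', he⟩ := hcorr f hf
          rw [if_pos ⟨f', hf', by rw [← he]; exact h1, by rw [← he]; exact h2⟩]
        · exact Nat.zero_le _
      have hIle1 : (if ∃ f ∈ F, f a = true ∧ f b = false then 1 else 0) ≤ 1 := by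
        split
        · exact le_rfl
        · exact Nat.zero_le 1
      by_cases ha : h a = true <;> by_cases hb : h b = true
      · -- both true
        have e0 : (a :: b :: t).filter (fun x => h x = false) =
            (b :: t).filter (fun x => h x = false) := by
          simp [List.filter_cons, ha]
        have e1 : (a :: b :: t).filter (fun x => h x = true) =
            a :: (b :: t).filter (fun x => h x = true) := by
          simp [List.filter_cons, ha]
        have e1' : (b :: t).filter (fun x => h x = true) =
            b :: t.filter (fun x => h x = true) := by
          simp [List.filter_cons, hb]
        have hch : (if h a ≠ h b then 1 else 0) = 0 := by simp [ha, hb]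
        rw [e1'] at e1
        simp only [e1', List.map_cons] at ih
        rw [jumps_cons_cons, changes_cons_cons, hch, e0, e1]
        simp only [List.map_cons, jumps_cons_cons F' (Fin.cons (h a) a)]
        exact (Nat.add_le_add hind ih).trans_eq (by ring)
      · -- h a = true, h b = false
        replace hb : h b = false := by simpa using hb
        have e0 : (a :: b :: t).filter (fun x => h x = false) =
            (b :: t).filter (fun x => h x = false) := by
          simp [List.filter_cons, ha]
        have e1 : (a :: b :: t).filter (fun x => h x = true) =
            a :: (b :: t).filter (fun x => h x = true) := by
          simp [List.filter_cons, ha]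
        have hch : (if h a ≠ h b then 1 else 0) = 1 := by simp [ha, hb]
        have e2 := jumps_tail_le F' (Fin.cons (h a) a)
          (((b :: t).filter (fun x => h x = true)).map (fun a => Fin.cons (h a) a))
        rw [jumps_cons_cons, changes_cons_cons, hch, e0, e1]
        simp only [List.map_cons]
        refine (Nat.add_le_add hIle1 ih).trans ?_
        refine (Nat.add_le_add_left
          (Nat.add_le_add_right (Nat.add_le_add_left e2 _) _) 1).trans_eq (by ring)
      · -- h a = false, h b = true
        replace ha : h a = false := by simpa using ha
        have e0 : (a :: b :: t).filter (fun x => h x = false) =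
            a :: (b :: t).filter (fun x => h x = false) := by
          simp [List.filter_cons, ha]
        have e1 : (a :: b :: t).filter (fun x => h x = true) =
            (b :: t).filter (fun x => h x = true) := by
          simp [List.filter_cons, ha]
        have hch : (if h a ≠ h b then 1 else 0) = 1 := by simp [ha, hb]
        have e2 := jumps_tail_le F' (Fin.cons (h a) a)
          (((b :: t).filter (fun x => h x = false)).map (fun a => Fin.cons (h a) a))
        rw [jumps_cons_cons, changes_cons_cons, hch, e0, e1]
        simp only [List.map_cons]
        refine (Nat.add_le_add hIle1 ih).trans ?_
        refine (Nat.add_le_add_left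
          (Nat.add_le_add_right (Nat.add_le_add_right e2 _) _) 1).trans_eq (by ring)
      · -- both false
        replace ha : h a = false := by simpa using ha
        replace hb : h b = false := by simpa using hb
        have e0 : (a :: b :: t).filter (fun x => h x = false) =
            a :: (b :: t).filter (fun x => h x = false) := by
          simp [List.filter_cons, ha]
        have e0' : (b :: t).filter (fun x => h x = false) =
            b :: t.filter (fun x => h x = false) := by
          simp [List.filter_cons, hb]
        have e1 : (a :: b :: t).filter (fun x => h x = true) =
            (b :: t).filter (fun x => h x = true) := by
          simp [List.filter_cons, ha]
        have hch : (if h a ≠ h b then 1 else 0) = 0 := by simp [ha, hb]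
        rw [e0'] at e0
        simp only [e0', List.map_cons] at ih
        rw [jumps_cons_cons, changes_cons_cons, hch, e0, e1]
        simp only [List.map_cons, jumps_cons_cons F' (Fin.cons (h a) a)]
        exact (Nat.add_le_add hind ih).trans_eq (by ring)

/-- splitting lemma: splitting an increasing chain `C` according
to the value of `h` yields two increasing chains in `{0,1}^{n+1}` (after
prepending the value of `h` to each tuple), and the jumps of `F` along `C` are
bounded by the jumps of `F'` along the two subchains plus the number of value
changes of `h` along `C`. -/
theorem stmt19 {n : ℕ} (l : List (Fin n → Bool)) (hl : IsIncChain l)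
    (h : (Fin n → Bool) → Bool)
    (F : Finset ((Fin n → Bool) → Bool))
    (F' : Finset ((Fin (n + 1) → Bool) → Bool))
    (hcorr : ∀ f ∈ F, ∃ f' ∈ F', ∀ x, f x = f' (Fin.cons (h x) x)) :
    IsIncChain ((l.filter (fun a => h a = false)).map
      (fun a => Fin.cons (h a) a)) ∧
    IsIncChain ((l.filter (fun a => h a = true)).map
      (fun a => Fin.cons (h a) a)) ∧
    jumps F l ≤
      jumps F' ((l.filter (fun a => h a = false)).map (fun a => Fin.cons (h a) a)) +
      jumps F' ((l.filter (fun a => h a = true)).map (fun a => Fin.cons (h a) a)) +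
      changes h l :=
  ⟨isIncChain_part l hl h false, isIncChain_part l hl h true,
    jumps_split h F F' hcorr l⟩
end
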